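/- arXiv:1308.2715 — 12 statements merged into one kernel-verified Lean document; each statement's English description precedes it below -/
import Mathlib

section
/- Let p be a prime and let R be a ring whose additive group is a p-group. If R is left p-nil or right p-nil, then for every n ≥ 1 the set of elements of the adjoint group R∘ whose ∘-order divides p^n coincides with the subgroup Ω_n(R^+) = {x ∈ R : p^n·x = 0} of the additive group of R. In particular, in R∘ the subgroup Ω_n(R∘) generated by elements of order dividing p^n equals the set Ω_{n}(R∘) of such elements. -/
/-- The adjoint group `R∘` of a non-unital ring `R`: the group of invertible elements of the
monoid `(R, ∘)` where `x ∘ y = x + y + x * y`. -/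
abbrev AdjointGroup (R : Type*) [NonUnitalRing R] : Type _ := (PreQuasiregular R)ˣ

/-- A ring is left `p`-nil if every `x` with `p • x = 0` (`4 • x = 0` when `p = 2`) is a left
annihilator. -/
def IsLeftPNil (p : ℕ) (R : Type*) [NonUnitalRing R] : Prop :=
  ∀ x : R, (if p = 2 then 4 else p) • x = 0 → ∀ y : R, x * y = 0

/-- A ring is right `p`-nil if every `x` with `p • x = 0` (`4 • x = 0` when `p = 2`) is a right
annihilator. -/
def IsRightPNil (p : ℕ) (R : Type*) [NonUnitalRing R] : Prop :=
  ∀ x : R, (if p = 2 then 4 else p) • x = 0 → ∀ y : R, y * x = 0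

namespace AdjointGroupPNil

open Unitization

/- ### Number-theoretic lemmas -/

lemma fact_le_sub_one {p i : ℕ} (hp : p.Prime) (hi : 1 ≤ i) : i.factorization p ≤ i - 1 := by
  by_contra h
  push_neg at h
  have h1 : p ^ i.factorization p ∣ i := Nat.ordProj_dvd i p
  have h2 : p ^ i.factorization p ≤ i := Nat.le_of_dvd hi h1
  have h3 : 2 ^ i ≤ p ^ i := Nat.pow_le_pow_left hp.two_le i
  have h4 : i < 2 ^ i := Nat.lt_two_pow_self (n := i)
  have h5 : p ^ i ≤ p ^ i.factorization p := Nat.pow_le_pow_right hp.pos (by omega)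
  omega

lemma fact_le_sub_two {p i : ℕ} (hp : p.Prime) (hp2 : p ≠ 2) (hi : 2 ≤ i) :
    i.factorization p ≤ i - 2 := by
  have hp3 : 3 ≤ p := (Nat.Prime.two_le hp).lt_of_ne (Ne.symm hp2)
  by_contra h
  push_neg at h
  have h1 : p ^ i.factorization p ∣ i := Nat.ordProj_dvd i p
  have h2 : p ^ i.factorization p ≤ i := Nat.le_of_dvd (by omega) h1
  have h4 : i - 1 < 2 ^ (i - 1) := Nat.lt_two_pow_self (n := i - 1)
  have h6 : 2 ^ (i - 1) < 3 ^ (i - 1) := Nat.pow_lt_pow_left (by omega) (by omega)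
  have h3 : 3 ^ (i - 1) ≤ p ^ (i - 1) := Nat.pow_le_pow_left hp3 _
  have h5 : p ^ (i - 1) ≤ p ^ i.factorization p := Nat.pow_le_pow_right hp.pos (by omega)
  omega

lemma pow_dvd_choose_pp {p n i : ℕ} (hp : p.Prime) (h1 : 1 ≤ i) (h2 : i ≤ p ^ n)
    (m : ℕ) (hm : m + i.factorization p ≤ n) : p ^ m ∣ (p ^ n).choose i := by
  apply pow_dvd_of_le_emultiplicity
  rw [Nat.Prime.emultiplicity_choose_prime_pow hp h2 (by omega),
    Nat.multiplicity_eq_factorization hp (by omega)]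
  exact_mod_cast Nat.le_sub_of_add_le (by omega)

/- ### Ring lemmas -/

variable {R : Type*} [NonUnitalRing R]

lemma inr_nsmul' (k : ℕ) (z : R) : (↑(k • z) : Unitization ℤ R) = k • (↑z : Unitization ℤ R) :=
  map_nsmul ((inrNonUnitalAlgHom ℤ R).toDistribMulActionHom.toAddMonoidHom) k z

/-- `pc p`: the "defect" exponent, 2 when `p = 2`, else 1. -/
def pc (p : ℕ) : ℕ := if p = 2 then 2 else 1

lemma smul_eq_zero_of_le {p k l : ℕ} {x : R} (h : k ≤ l) (hx : p ^ k • x = 0) :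
    p ^ l • x = 0 := by
  obtain ⟨d, rfl⟩ : ∃ d, l = d + k := ⟨l - k, by omega⟩
  rw [pow_add, mul_smul, hx, smul_zero]

lemma step_left {p : ℕ} (h : IsLeftPNil p R) (x y : R) (m : ℕ)
    (hx : p ^ (m + pc p) • x = 0) : p ^ m • (x * y) = 0 := by
  have key : (if p = 2 then 4 else p) • (p ^ m • x) = 0 := by
    rw [smul_smul]
    unfold pc at hx
    split_ifs with h2
    · subst h2
      rw [show 4 * 2 ^ m = 2 ^ (m + 2) by ring]
      simpa using hx
    · rw [show p * p ^ m = p ^ (m + 1) by ring]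
      simpa [h2] using hx
  have := h _ key y
  rwa [smul_mul_assoc] at this

lemma step_right {p : ℕ} (h : IsRightPNil p R) (x y : R) (m : ℕ)
    (hx : p ^ (m + pc p) • x = 0) : p ^ m • (y * x) = 0 := by
  have key : (if p = 2 then 4 else p) • (p ^ m • x) = 0 := by
    rw [smul_smul]
    unfold pc at hx
    split_ifs with h2
    · subst h2
      rw [show 4 * 2 ^ m = 2 ^ (m + 2) by ring]
      simpa using hx
    · rw [show p * p ^ m = p ^ (m + 1) by ring]
      simpa [h2] using hx
  have := h _ key y
  rwa [mul_smul_comm] at this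

/-- Powers of `x` in the unitization: order control. -/
lemma main_pow {p : ℕ} (hnil : IsLeftPNil p R ∨ IsRightPNil p R) (x : R) :
    ∀ i, 1 ≤ i → ∀ m : ℕ, p ^ (m + pc p * (i - 1)) • x = 0 →
      ∃ z : R, (↑x : Unitization ℤ R) ^ i = ↑z ∧ p ^ m • z = 0 := by
  intro i
  induction i with
  | zero => omega
  | succ i ih =>
    intro _ m hm
    rcases Nat.eq_zero_or_pos i with rfl | hi
    · exact ⟨x, pow_one _, by simpa using hm⟩
    · obtain ⟨j, rfl⟩ : ∃ j, i = j + 1 := ⟨i - 1, by omega⟩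
      obtain ⟨z, hz, hz0⟩ := ih hi (m + pc p) (by
        have e : m + pc p + pc p * (j + 1 - 1) = m + pc p * (j + 1 + 1 - 1) := by
          simp only [Nat.add_sub_cancel]
          ring
        rwa [e])
      rcases hnil with hL | hR
      · refine ⟨z * x, ?_, step_left hL z x m hz0⟩
        rw [pow_succ, hz, ← inr_mul]
      · refine ⟨x * z, ?_, step_right hR z x m hz0⟩
        rw [pow_succ', hz, ← inr_mul]


lemma fact_bound {p i : ℕ} (hp : p.Prime) (hi : 1 ≤ i) :
    i.factorization p ≤ pc p * (i - 1) := by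
  rcases eq_or_lt_of_le hi with h | h
  · simp [← h]
  · have h1 := fact_le_sub_one hp hi
    have h2 : 1 * (i - 1) ≤ pc p * (i - 1) :=
      Nat.mul_le_mul_right _ (by unfold pc; split <;> omega)
    omega

lemma fact_bound' {p i : ℕ} (hp : p.Prime) (hi : 2 ≤ i) :
    i.factorization p + 1 ≤ pc p * (i - 1) := by
  by_cases h2 : p = 2
  · have h1 := fact_le_sub_one (i := i) hp (by omega)
    subst h2
    unfold pc
    rw [if_pos rfl]
    omega
  · have h1 := fact_le_sub_two hp h2 hi
    unfold pc
    rw [if_neg h2, one_mul]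
    omega

lemma one_add_pow {S : Type*} [Ring S] (a : S) (k : ℕ) :
    (1 + a) ^ k = ∑ i ∈ Finset.range (k + 1), (k.choose i) • a ^ i := by
  rw [add_comm, (Commute.one_right a).add_pow]
  refine Finset.sum_congr rfl fun i _ => ?_
  rw [one_pow, mul_one, nsmul_eq_mul, (Nat.cast_commute (k.choose i) (a ^ i)).eq]

lemma circle_pow_eq_one {p : ℕ} (hp : p.Prime)
    (hnil : IsLeftPNil p R ∨ IsRightPNil p R) {x : R} {n : ℕ} (hn : 1 ≤ n)
    (hx : p ^ n • x = 0) : (1 + (↑x : Unitization ℤ R)) ^ p ^ n = 1 := by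
  rw [one_add_pow (↑x : Unitization ℤ R)]
  rw [Finset.sum_eq_single_of_mem 0 (Finset.mem_range.mpr (by positivity)) ?_]
  · simp
  · intro i hi hi0
    have hi1 : 1 ≤ i := Nat.one_le_iff_ne_zero.mpr hi0
    have hile : i ≤ p ^ n := by
      have := Finset.mem_range.mp hi
      omega
    set m := n - pc p * (i - 1) with hm
    obtain ⟨z, hz, hz0⟩ := main_pow hnil x i hi1 m
      (smul_eq_zero_of_le (by omega) hx)
    have hdvd : p ^ m ∣ (p ^ n).choose i := by
      rcases le_or_gt n (pc p * (i - 1)) with hcase | hcase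
      · have hm0 : m = 0 := by omega
        simp [hm0]
      · have hv := fact_bound hp hi1
        exact pow_dvd_choose_pp hp hi1 hile m (by omega)
    obtain ⟨t, ht⟩ := hdvd
    rw [ht, mul_comm, mul_smul, hz, ← inr_nsmul', hz0, inr_zero, smul_zero]

lemma smul_eq_zero_of_circle {p : ℕ} (hp : p.Prime)
    (hnil : IsLeftPNil p R ∨ IsRightPNil p R) {x : R} {n : ℕ} (hn : 1 ≤ n)
    (h : (1 + (↑x : Unitization ℤ R)) ^ p ^ n = 1) {k : ℕ} (hk : p ^ k • x = 0) :
    p ^ n • x = 0 := by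
  have claim : ∀ j, p ^ (n + j) • x = 0 → p ^ n • x = 0 := by
    intro j
    induction j with
    | zero => simpa
    | succ j ih =>
      intro hj
      apply ih
      set a : Unitization ℤ R := (↑x : Unitization ℤ R) with ha
      have hK1 : 1 ≤ p ^ n := Nat.one_le_pow _ _ hp.pos
      obtain ⟨K', hK'⟩ : ∃ K', p ^ n = K' + 1 := ⟨p ^ n - 1, by omega⟩
      have expand : ∑ i ∈ Finset.range (p ^ n + 1), (p ^ n).choose i • a ^ i = 1 := by
        rw [← one_add_pow a]
        exact h
      rw [Finset.sum_range_succ'] at expand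
      simp only [pow_zero, Nat.choose_zero_right, one_smul] at expand
      have S1 := add_eq_right.mp expand
      rw [hK', Finset.sum_range_succ'] at S1
      simp only [zero_add, Nat.choose_one_right, pow_one, ← hK'] at S1
      have hterm : ∀ i ∈ Finset.range K',
          p ^ j • ((p ^ n).choose (i + 1 + 1) • a ^ (i + 1 + 1)) = 0 := by
        intro i _hi
        have hi2 : 2 ≤ i + 1 + 1 := by omega
        have hj' : p ^ (n + j + 1) • x = 0 := by
          have e : n + (j + 1) = n + j + 1 := by omega
          rwa [e] at hj
        have hile : i + 1 + 1 ≤ p ^ n := by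
          have := Finset.mem_range.mp _hi
          omega
        set m := (n + j + 1) - pc p * (i + 1 + 1 - 1) with hm
        obtain ⟨z, hz, hz0⟩ := main_pow hnil x (i + 1 + 1) (by omega) m
          (smul_eq_zero_of_le (by omega) hj')
        have hdvd : p ^ m ∣ p ^ j * (p ^ n).choose (i + 1 + 1) := by
          have hv := fact_bound' hp hi2
          rcases le_or_gt m j with hcase | hcase
          · exact Dvd.dvd.mul_right (pow_dvd_pow p hcase) _
          · have h1 : p ^ (m - j) ∣ (p ^ n).choose (i + 1 + 1) :=
              pow_dvd_choose_pp hp (by omega) hile (m - j) (by omega)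
            calc p ^ m = p ^ j * p ^ (m - j) := by rw [← pow_add]; congr 1; omega
            _ ∣ p ^ j * (p ^ n).choose (i + 1 + 1) := mul_dvd_mul_left _ h1
        obtain ⟨t, ht⟩ := hdvd
        rw [smul_smul, ht, mul_comm, mul_smul, hz, ← inr_nsmul', hz0, inr_zero, smul_zero]
      have key : p ^ (n + j) • a = 0 := by
        have e1 : p ^ (n + j) • a = p ^ j • (p ^ n • a) := by
          rw [smul_smul, ← pow_add, add_comm j n]
        rw [e1, eq_neg_of_add_eq_zero_right S1, smul_neg, Finset.smul_sum,
          Finset.sum_congr rfl hterm, Finset.sum_const_zero, neg_zero]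
      have : (↑(p ^ (n + j) • x) : Unitization ℤ R) = ↑(0 : R) := by
        rw [inr_nsmul', inr_zero]
        exact key
      exact inr_injective this
  exact claim k (smul_eq_zero_of_le (by omega) hk)


/- ### Bridge to `PreQuasiregular` -/

lemma pq_ext {u v : PreQuasiregular R} (h : u.val = v.val) : u = v := by
  cases u; cases v; cases h; rfl

lemma pq_pow_val (x : R) (k : ℕ) :
    (1 : Unitization ℤ R) + ↑(((PreQuasiregular.equiv x : PreQuasiregular R)) ^ k).val
      = (1 + (↑x : Unitization ℤ R)) ^ k := by
  induction k with
  | zero => simp [PreQuasiregular.val_one]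
  | succ k ih =>
    rw [pow_succ, pow_succ, ← ih, PreQuasiregular.val_mul]
    simp only [inr_add, inr_mul,
      show (PreQuasiregular.equiv x : PreQuasiregular R).val = x from rfl]
    noncomm_ring

lemma pq_pow_eq_one_iff (w : PreQuasiregular R) (k : ℕ) :
    w ^ k = 1 ↔ (1 + (↑w.val : Unitization ℤ R)) ^ k = 1 := by
  have hw : (PreQuasiregular.equiv w.val : PreQuasiregular R) = w := pq_ext rfl
  constructor
  · intro h
    have h2 := pq_pow_val w.val k
    rw [hw, h, PreQuasiregular.val_one, inr_zero, add_zero] at h2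
    exact h2.symm
  · intro h
    apply pq_ext
    have h2 := pq_pow_val w.val k
    rw [hw, h] at h2
    have h3 : (↑((w ^ k).val) : Unitization ℤ R) = 0 := add_eq_left.mp h2
    rw [← inr_zero ℤ] at h3
    rw [PreQuasiregular.val_one]
    exact inr_injective h3

lemma units_pow_eq_one_iff {M : Type*} [Monoid M] (u : Mˣ) (k : ℕ) :
    u ^ k = 1 ↔ u.val ^ k = 1 := by
  rw [Units.ext_iff, Units.val_pow_eq_pow_val, Units.val_one]

/-- The key characterization: an element of the adjoint group has `∘`-order dividing `p ^ n`
iff its additive order divides `p ^ n`. -/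
lemma adj_iff {p : ℕ} (hp : p.Prime) (hpR : ∀ x : R, ∃ k : ℕ, p ^ k • x = 0)
    (hnil : IsLeftPNil p R ∨ IsRightPNil p R) {n : ℕ} (hn : 1 ≤ n)
    (u : AdjointGroup R) : u ^ p ^ n = 1 ↔ p ^ n • u.val.val = 0 := by
  rw [units_pow_eq_one_iff, pq_pow_eq_one_iff]
  constructor
  · intro h
    obtain ⟨k, hk⟩ := hpR u.val.val
    exact smul_eq_zero_of_circle hp hnil hn h hk
  · exact circle_pow_eq_one hp hnil hn

lemma prod_smul_zero {p : ℕ} (hnil : IsLeftPNil p R ∨ IsRightPNil p R) {n : ℕ} (hn : 1 ≤ n)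
    {x y : R} (hx : p ^ n • x = 0) (hy : p ^ n • y = 0) : p ^ n • (x * y) = 0 := by
  have hpc : 1 ≤ pc p := by unfold pc; split <;> omega
  rcases hnil with hL | hR
  · have hx' : p ^ ((n - pc p) + pc p) • x = 0 := smul_eq_zero_of_le (by omega) hx
    exact smul_eq_zero_of_le (by omega) (step_left hL x y (n - pc p) hx')
  · have hy' : p ^ ((n - pc p) + pc p) • y = 0 := smul_eq_zero_of_le (by omega) hy
    exact smul_eq_zero_of_le (by omega) (step_right hR y x (n - pc p) hy')

end AdjointGroupPNil

/-- **Theorem A.** Let `R` be a `p`-ring (its additive group is a `p`-group). If `R` is left or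
right `p`-nil, then for every `n ≥ 1` the set of elements of the adjoint group `R∘` whose
`∘`-order divides `p ^ n` coincides with `Ω_n(R⁺) = {x : R | p ^ n • x = 0}`; in particular the
subgroup of `R∘` generated by the elements of order dividing `p ^ n` is exactly the set of such
elements. -/
theorem adjointGroup_omega_eq_of_pNil (p : ℕ) (hp : p.Prime) (R : Type*) [NonUnitalRing R]
    (hpR : ∀ x : R, ∃ k : ℕ, p ^ k • x = 0)
    (hnil : IsLeftPNil p R ∨ IsRightPNil p R) (n : ℕ) (hn : 1 ≤ n) :
    {x : R | ∃ u : AdjointGroup R, u.val.val = x ∧ u ^ p ^ n = 1} =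
      {x : R | p ^ n • x = 0} ∧
    ∀ u : AdjointGroup R,
      u ∈ Subgroup.closure {v : AdjointGroup R | v ^ p ^ n = 1} ↔ u ^ p ^ n = 1 := by
  have hK1 : 1 ≤ p ^ n := Nat.one_le_pow _ _ hp.pos
  constructor
  · ext x
    simp only [Set.mem_setOf_eq]
    constructor
    · rintro ⟨u, rfl, hpow⟩
      exact (AdjointGroupPNil.adj_iff hp hpR hnil hn u).mp hpow
    · intro hx
      have h1 : (PreQuasiregular.equiv x : PreQuasiregular R) ^ p ^ n = 1 := by
        rw [AdjointGroupPNil.pq_pow_eq_one_iff]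
        exact AdjointGroupPNil.circle_pow_eq_one hp hnil hn hx
      have hm1 : (p ^ n - 1) + 1 = p ^ n := by omega
      refine ⟨⟨PreQuasiregular.equiv x, (PreQuasiregular.equiv x) ^ (p ^ n - 1), ?_, ?_⟩,
        rfl, ?_⟩
      · rw [← pow_succ', hm1, h1]
      · rw [← pow_succ, hm1, h1]
      · apply Units.ext
        rw [Units.val_pow_eq_pow_val, Units.val_one]
        exact h1
  · intro u
    constructor
    · intro hu
      let K : Subgroup (AdjointGroup R) :=
        { carrier := {v : AdjointGroup R | v ^ p ^ n = 1}
          one_mem' := one_pow _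
          mul_mem' := by
            intro a b ha hb
            simp only [Set.mem_setOf_eq, AdjointGroupPNil.adj_iff hp hpR hnil hn] at ha hb ⊢
            show p ^ n • ((a.val * b.val).val) = 0
            rw [PreQuasiregular.val_mul, smul_add, smul_add, ha, hb,
              AdjointGroupPNil.prod_smul_zero hnil hn ha hb, add_zero, add_zero]
          inv_mem' := by
            intro a ha
            simp only [Set.mem_setOf_eq] at ha ⊢
            rw [inv_pow, ha, inv_one] }
      exact (Subgroup.closure_le K).mpr (fun v hv => hv) hu
    · intro hu
      exact Subgroup.subset_closure hu
end

section
/- Let p be a prime and let R be a ring whose additive group is a p-group. If R is p-nil, then Ω_1(R∘) is contained in the center of the adjoint group R∘ when p > 2, and Ω_2(R∘) is contained in the center of R∘ when p = 2; that is, R∘ is p-central. -/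
section Aux

open Unitization Finset

variable {p : ℕ} {R : Type*} [NonUnitalRing R]

private lemma fst_nsmul' (n : ℕ) (a : Unitization ℤ R) : (n • a).fst = n • a.fst :=
  map_nsmul (fstHom ℤ R).toAddMonoidHom n a

private lemma snd_nsmul' (n : ℕ) (a : Unitization ℤ R) : (n • a).snd = n • a.snd :=
  map_nsmul (sndHom ℤ ℤ R) n a

private lemma fst_pow' {a : Unitization ℤ R} (h : a.fst = 0) (n : ℕ) : (a ^ (n + 1)).fst = 0 := by
  induction n with
  | zero => simpa using h
  | succ n ih => rw [pow_succ, fst_mul, ih, zero_mul]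

/-- If `q • z = 0` and `z` has scalar part zero, then `z` left-annihilates. -/
private lemma mul_eq_zero_of_q (hl : IsLeftPNil p R)
    {z w : Unitization ℤ R} (hz : z.fst = 0) (hw : w.fst = 0)
    (h : (if p = 2 then 4 else p) • z = 0) : z * w = 0 := by
  have hsnd : (if p = 2 then 4 else p) • z.snd = 0 := by
    rw [← snd_nsmul', h, snd_zero]
  refine Unitization.ext ?_ ?_
  · rw [fst_mul, hz, zero_mul, fst_zero]
  · rw [snd_mul, hz, hw, zero_smul, zero_smul, hl z.snd hsnd w.snd, snd_zero]
    abel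

/-- Descent of additive orders of powers. -/
private lemma pow_order (hl : IsLeftPNil p R) {a : Unitization ℤ R} (ha : a.fst = 0)
    {e k : ℕ} (he : (if p = 2 then 4 else p) = p ^ e)
    (hk : p ^ k • a = 0) : ∀ j : ℕ, p ^ (k - e * j) • a ^ (j + 1) = 0 := by
  intro j
  induction j with
  | zero => simpa using hk
  | succ j ih =>
    have h1 : (if p = 2 then 4 else p) • (p ^ (k - e * (j + 1)) • a ^ (j + 1)) = 0 := by
      rw [he, smul_smul, ← pow_add]
      have hmul : e * (j + 1) = e * j + e := by ring
      have hle : e + (k - e * (j + 1)) = ((e + (k - e * (j + 1))) - (k - e * j)) + (k - e * j) := by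
        omega
      rw [hle, pow_add, mul_smul, ih, smul_zero]
    have hz : (p ^ (k - e * (j + 1)) • a ^ (j + 1)).fst = 0 := by
      rw [fst_nsmul', fst_pow' ha, smul_zero]
    rw [pow_succ, ← smul_mul_assoc]
    exact mul_eq_zero_of_q hl hz ha h1

/-- Extracting the binomial relation from `(a+1)^(n+2) = 1`. -/
private lemma rel_of_pow (a : Unitization ℤ R) (n : ℕ) (h : (a + 1) ^ (n + 2) = 1) :
    ∑ i ∈ Finset.range (n + 1), (n + 2).choose (i + 2) • a ^ (i + 2) + (n + 2) • a = 0 := by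
  have hb := Commute.add_pow (R := Unitization ℤ R) (Commute.one_right a) (n + 2)
  rw [h] at hb
  have hb' : (1 : Unitization ℤ R) = ∑ k ∈ Finset.range (n + 3), (n + 2).choose k • a ^ k := by
    rw [hb]
    refine Finset.sum_congr rfl fun k _ => ?_
    rw [nsmul_eq_mul, (Nat.cast_commute ((n + 2).choose k) (a ^ k)).eq]
    congr 1
    exact (congrArg (a ^ k * ·) (one_pow (M := Unitization ℤ R) (n + 2 - k))).trans (mul_one _)
  rw [show n + 3 = (n + 2) + 1 from rfl, Finset.sum_range_succ', Finset.sum_range_succ'] at hb'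
  simp only [pow_zero, Nat.choose_zero_right, one_smul, Nat.choose_one_right, pow_one] at hb'
  have := right_eq_add.mp hb'
  simpa using this

/-- Main descent: from `p^k • a = 0` deduce `p^e • a = 0`. -/
private lemma q_smul_eq_zero (hl : IsLeftPNil p R)
    {a : Unitization ℤ R} (ha : a.fst = 0) {e n : ℕ}
    (he : (if p = 2 then 4 else p) = p ^ e) (he1 : 1 ≤ e) (hn : p ^ e = n + 2)
    (hch : p ∣ (n + 2).choose 2)
    (hrel : (a + 1) ^ (n + 2) = 1) :
    ∀ k, p ^ k • a = 0 → p ^ e • a = 0 := by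
  have hrel' := rel_of_pow a n hrel
  intro k
  induction k with
  | zero =>
    intro h
    rw [pow_zero, one_smul] at h
    rw [h, smul_zero]
  | succ k ih =>
    intro h
    by_cases hke : k + 1 ≤ e
    · rw [show e = (e - (k + 1)) + (k + 1) by omega, pow_add, mul_smul, h, smul_zero]
    · apply ih
      push_neg at hke
      have hek : e ≤ k := by omega
      have horder := pow_order hl ha he h
      have h2 : p ^ k • a = p ^ (k - e) • (p ^ e • a) := by
        rw [smul_smul, ← pow_add, Nat.sub_add_cancel hek]
      have h3 : (n + 2) • a =
          -∑ i ∈ Finset.range (n + 1), (n + 2).choose (i + 2) • a ^ (i + 2) :=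
        eq_neg_of_add_eq_zero_right hrel'
      rw [h2, hn, h3, smul_neg, Finset.smul_sum, neg_eq_zero]
      apply Finset.sum_eq_zero
      intro i _
      have hz := horder (i + 1)
      have hdvd : p ^ (k + 1 - e * (i + 1)) ∣ p ^ (k - e) * (n + 2).choose (i + 2) := by
        rcases Nat.eq_zero_or_pos i with hi0 | hi1
        · subst hi0
          obtain ⟨c, hc⟩ := hch
          refine ⟨c, ?_⟩
          rw [hc, show k + 1 - e * 1 = (k - e) + 1 by omega, pow_succ]
          ring
        · have h2e : 2 * e ≤ e * (i + 1) := by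
            calc 2 * e = e * 2 := by ring
            _ ≤ e * (i + 1) := Nat.mul_le_mul_left e (by omega)
          exact Dvd.dvd.mul_right (pow_dvd_pow p (by omega)) _
      obtain ⟨c, hc⟩ := hdvd
      rw [smul_smul, hc, mul_comm, mul_smul, hz, smul_zero]

/-- The natural monoid embedding of the circle monoid into the unitization. -/
private def toUnitization (R : Type*) [NonUnitalRing R] :
    PreQuasiregular R →* Unitization ℤ R where
  toFun x := 1 + x.val
  map_one' := by
    show 1 + ((1 : PreQuasiregular R).val : Unitization ℤ R) = 1
    rw [PreQuasiregular.val_one, Unitization.inr_zero, add_zero]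
  map_mul' x y := by
    simp only [PreQuasiregular.val_mul, Unitization.inr_add, Unitization.inr_mul]
    noncomm_ring

end Aux

/-- **Corollary A.** Let `R` be a `p`-ring. If `R` is `p`-nil (both left and right `p`-nil), then
`Ω₁(R∘) ≤ Z(R∘)` for odd `p`, and `Ω₂(R∘) ≤ Z(R∘)` for `p = 2`; that is, `R∘` is `p`-central. -/
theorem adjointGroup_pCentral_of_pNil (p : ℕ) (hp : p.Prime) (R : Type*) [NonUnitalRing R]
    (hpR : ∀ x : R, ∃ k : ℕ, p ^ k • x = 0)
    (hl : IsLeftPNil p R) (hr : IsRightPNil p R) :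
    Subgroup.closure {x : AdjointGroup R | x ^ p ^ (if p = 2 then 2 else 1) = 1} ≤
      Subgroup.center (AdjointGroup R) := by
  rw [Subgroup.closure_le]
  intro u hu
  simp only [Set.mem_setOf_eq] at hu
  obtain ⟨e, he, he1, hpe⟩ :
      ∃ e, (if p = 2 then 4 else p) = p ^ e ∧ 1 ≤ e ∧ p ^ (if p = 2 then 2 else 1) = p ^ e := by
    by_cases h2 : p = 2
    · subst h2; exact ⟨2, by norm_num, one_le_two, by norm_num⟩
    · exact ⟨1, by simp [h2], le_refl 1, by simp [h2]⟩
  set x : R := u.val.val with hx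
  set a : Unitization ℤ R := (x : Unitization ℤ R) with hadef
  have ha : a.fst = 0 := Unitization.fst_inr ℤ x
  -- the relation (a+1)^(p^e) = 1
  have hu1 : (u.val : PreQuasiregular R) ^ (p ^ e) = 1 := by
    rw [← hpe, ← Units.val_pow_eq_pow_val, hu, Units.val_one]
  have hrel : (a + 1) ^ (p ^ e) = 1 := by
    have := congrArg (toUnitization R) hu1
    rw [map_pow, map_one] at this
    have hto : toUnitization R u.val = a + 1 := by
      show 1 + (x : Unitization ℤ R) = a + 1
      rw [add_comm, hadef]
    rw [hto] at this
    exact this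
  -- p-power order of x
  obtain ⟨k, hk⟩ := hpR x
  have hk' : p ^ k • a = 0 := by
    have h2 : p ^ k • a = ((p ^ k • x : R) : Unitization ℤ R) :=
      (map_nsmul (Unitization.inrNonUnitalAlgHom ℤ R) (p ^ k) x).symm
    rw [h2, hk, Unitization.inr_zero]
  -- n with p^e = n+2
  have hp2 : 2 ≤ p := hp.two_le
  have hpe2 : 2 ≤ p ^ e := le_trans hp2 (Nat.le_self_pow (by omega) p)
  obtain ⟨n, hn⟩ : ∃ n, p ^ e = n + 2 := ⟨p ^ e - 2, by omega⟩
  have hch : p ∣ (n + 2).choose 2 := by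
    by_cases h2 : p = 2
    · have : n + 2 = 4 := by
        rw [← hn, ← he, if_pos h2]
      rw [this, h2]
      decide
    · have hpn : n + 2 = p := by rw [← hn, ← he, if_neg h2]
      rw [hpn]
      exact hp.dvd_choose_self (by norm_num) (by omega)
  have hqa : p ^ e • a = 0 := by
    have hrel2 : (a + 1) ^ (n + 2) = 1 := by rw [← hn]; exact hrel
    exact q_smul_eq_zero hl ha he he1 hn hch hrel2 k hk'
  -- q • x = 0 in R
  have hqx : (if p = 2 then 4 else p) • x = 0 := by
    rw [he]
    have : (p ^ e • a).snd = (0 : Unitization ℤ R).snd := congrArg (fun z : Unitization ℤ R => z.snd) hqa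
    rw [snd_nsmul'] at this
    simpa [hadef] using this
  -- x annihilates everything, so u is central
  rw [SetLike.mem_coe, Subgroup.mem_center_iff]
  intro g
  refine Units.ext (PreQuasiregular.equiv.symm.injective ?_)
  show (g.val * u.val).val = (u.val * g.val).val
  rw [PreQuasiregular.val_mul, PreQuasiregular.val_mul]
  rw [hl x hqx g.val.val, hr x hqx g.val.val]
  abel
end

section
/- Let p be a prime and let R be a ring whose additive group has finite exponent p^m. If R is left p-nil or right p-nil, then R is nilpotent of class at most m, i.e. R^{m+1} = 0, where R^k denotes the additive subgroup generated by all products of k elements of R. -/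
/-- The set of products of `k` elements of `R` (by associativity, every such product is a
left-normed one). -/
def ringProducts (R : Type*) [NonUnitalRing R] : ℕ → Set R
  | 0 => Set.univ
  | 1 => Set.univ
  | (k + 2) => {z : R | ∃ x ∈ ringProducts R (k + 1), ∃ y : R, z = x * y}

/-- `R^k`: the additive subgroup generated by all products of `k` elements of `R`. -/
def ringPower (R : Type*) [NonUnitalRing R] (k : ℕ) : AddSubgroup R :=
  AddSubgroup.closure (ringProducts R k)

lemma left_step {p : ℕ} {R : Type*} [NonUnitalRing R] (hL : IsLeftPNil p R)
    {j : ℕ} (hj : 1 ≤ j) {x : R} (hx : p ^ j • x = 0) (y : R) :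
    p ^ (j - 1) • (x * y) = 0 := by
  by_cases hp2 : p = 2
  · subst hp2
    rcases Nat.lt_or_ge j 2 with h | h
    · have hj1 : j = 1 := by omega
      subst hj1
      have h4 : (4 : ℕ) • x = 0 := by
        rw [show (4 : ℕ) = 2 * 2 ^ 1 from rfl, mul_smul, hx, smul_zero]
      have := hL x (by simpa using h4) y
      simpa using this
    · have h4 : (4 : ℕ) • (2 ^ (j - 2) • x) = 0 := by
        rw [smul_smul, show (4 : ℕ) * 2 ^ (j - 2) = 2 ^ j by
          rw [show (4 : ℕ) = 2 ^ 2 from rfl, ← pow_add]; congr 1; omega, hx]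
      have h0 := hL _ (by simpa using h4) y
      rw [smul_mul_assoc] at h0
      rw [show j - 1 = (j - 2) + 1 by omega, pow_succ, mul_comm, mul_smul, h0, smul_zero]
  · have hpx : p • (p ^ (j - 1) • x) = 0 := by
      rw [smul_smul, show p * p ^ (j - 1) = p ^ j by
        rw [mul_comm, ← pow_succ]; congr 1; omega, hx]
    have := hL _ (by simpa [hp2] using hpx) y
    rwa [smul_mul_assoc] at this

lemma right_step {p : ℕ} {R : Type*} [NonUnitalRing R] (hR : IsRightPNil p R)
    {j : ℕ} (hj : 1 ≤ j) {y : R} (hy : p ^ j • y = 0) (x : R) :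
    p ^ (j - 1) • (x * y) = 0 := by
  by_cases hp2 : p = 2
  · subst hp2
    rcases Nat.lt_or_ge j 2 with h | h
    · have hj1 : j = 1 := by omega
      subst hj1
      have h4 : (4 : ℕ) • y = 0 := by
        rw [show (4 : ℕ) = 2 * 2 ^ 1 from rfl, mul_smul, hy, smul_zero]
      have := hR y (by simpa using h4) x
      simpa using this
    · have h4 : (4 : ℕ) • (2 ^ (j - 2) • y) = 0 := by
        rw [smul_smul, show (4 : ℕ) * 2 ^ (j - 2) = 2 ^ j by
          rw [show (4 : ℕ) = 2 ^ 2 from rfl, ← pow_add]; congr 1; omega, hy]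
      have h0 := hR _ (by simpa using h4) x
      rw [mul_smul_comm] at h0
      rw [show j - 1 = (j - 2) + 1 by omega, pow_succ, mul_comm, mul_smul, h0, smul_zero]
  · have hpy : p • (p ^ (j - 1) • y) = 0 := by
      rw [smul_smul, show p * p ^ (j - 1) = p ^ j by
        rw [mul_comm, ← pow_succ]; congr 1; omega, hy]
    have := hR _ (by simpa [hp2] using hpy) x
    rwa [mul_smul_comm] at this

/-- Products can also be decomposed with the long factor on the right. -/
lemma ringProducts_right_decomp {R : Type*} [NonUnitalRing R] :
    ∀ k : ℕ, ∀ z ∈ ringProducts R (k + 2),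
      ∃ x : R, ∃ y ∈ ringProducts R (k + 1), z = x * y := by
  intro k
  induction k with
  | zero =>
    rintro z ⟨x, -, y, rfl⟩
    exact ⟨x, y, trivial, rfl⟩
  | succ k ih =>
    rintro z ⟨x, hx, y, rfl⟩
    obtain ⟨a, b, hb, rfl⟩ := ih x hx
    exact ⟨a, b * y, ⟨b, hb, y, rfl⟩, mul_assoc a b y⟩

/-- **Theorem 2.2 (ring part).** Let `R` be a ring whose additive group has finite exponent
`p ^ m`. If `R` is left or right `p`-nil, then `R` is nilpotent of class at most `m`,
i.e. `R ^ (m + 1) = 0`. -/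
theorem pNil_ring_nilpotent (p m : ℕ) (hp : p.Prime) (R : Type*) [NonUnitalRing R]
    (hexp : AddMonoid.exponent R = p ^ m)
    (hnil : IsLeftPNil p R ∨ IsRightPNil p R) :
    ringPower R (m + 1) = ⊥ := by
  have key : ∀ k : ℕ, ∀ x ∈ ringProducts R (k + 1), p ^ (m - k) • x = 0 := by
    intro k
    induction k with
    | zero =>
      intro x _
      rw [Nat.sub_zero, ← hexp]
      exact AddMonoid.exponent_nsmul_eq_zero x
    | succ k ih =>
      intro z hz
      rcases hnil with hL | hR
      · obtain ⟨x, hx, y, rfl⟩ := hz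
        have h := ih x hx
        rcases Nat.eq_zero_or_pos (m - k) with h0 | h1
        · rw [h0, pow_zero, one_smul] at h
          rw [h, zero_mul, smul_zero]
        · rw [show m - (k + 1) = (m - k) - 1 by omega]
          exact left_step hL h1 h y
      · obtain ⟨x, y, hy, rfl⟩ := ringProducts_right_decomp k z hz
        have h := ih y hy
        rcases Nat.eq_zero_or_pos (m - k) with h0 | h1
        · rw [h0, pow_zero, one_smul] at h
          rw [h, mul_zero, smul_zero]
        · rw [show m - (k + 1) = (m - k) - 1 by omega]
          exact right_step hR h1 h x
  rw [eq_bot_iff, ringPower, AddSubgroup.closure_le]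
  intro x hx
  have := key m x hx
  rw [Nat.sub_self, pow_zero, one_smul] at this
  simpa [AddSubgroup.mem_bot] using this
end

section
/- Let p be a prime and let R be a ring whose additive group has finite exponent p^m. If R is left p-nil or right p-nil, then the adjoint group R∘ is nilpotent of class at most m. -/
namespace PNilAux

variable {R : Type*} [NonUnitalRing R]

/-- If `n ^ i • x = 0` and `i ≤ j` then `n ^ j • x = 0`. -/
lemma pow_smul_absorb {x : R} {n i j : ℕ} (h : i ≤ j) (hx : n ^ i • x = 0) :
    n ^ j • x = 0 := by
  have : n ^ j • x = n ^ (j - i) • n ^ i • x := by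
    rw [smul_smul, ← pow_add, Nat.sub_add_cancel h]
  rw [this, hx, smul_zero]

/-- `p • z = 0` implies the `p`-nil hypothesis condition holds for `z`. -/
lemma pcond {p : ℕ} {z : R} (hz : p • z = 0) : (if p = 2 then 4 else p) • z = 0 := by
  split_ifs with h
  · subst h
    rw [show (4 : ℕ) = 2 * 2 from rfl, mul_smul, hz, smul_zero]
  · exact hz

open scoped commutatorElement in
/-- Generic nilpotency criterion for the adjoint group, from a decreasing chain of
additive subgroups that behaves like the chain of powers of the ring. -/
lemma lcs_le_of_chain (m : ℕ) (J : ℕ → AddSubgroup R)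
    (hJ0 : ∀ x : R, x ∈ J 0)
    (hmono : ∀ k, J (k + 1) ≤ J k)
    (hmulL : ∀ k, ∀ x ∈ J k, ∀ b : R, b * x ∈ J (k + 1))
    (hmulR : ∀ k, ∀ x ∈ J k, ∀ b : R, x * b ∈ J (k + 1))
    (hJm : ∀ x ∈ J m, x = 0) :
    (⊤ : Subgroup (AdjointGroup R)).lowerCentralSeries m = ⊥ := by
  let H : ℕ → Subgroup (AdjointGroup R) := fun k =>
    { carrier := {g | g.val.val ∈ J k}
      one_mem' := (J k).zero_mem
      mul_mem' := by
        intro g h hg hh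
        show (g * h).val.val ∈ J k
        have hval : (g * h).val.val = h.val.val + g.val.val + g.val.val * h.val.val := rfl
        rw [hval]
        exact add_mem (add_mem hh hg) (hmono k (hmulR k _ hg _))
      inv_mem' := by
        intro g hg
        show (g⁻¹).val.val ∈ J k
        have h0 := PreQuasiregular.inv_add_add_mul_eq_zero g
        have heq : (g⁻¹).val.val = -(g.val.val + g.val.val * (g⁻¹).val.val) := by
          rw [eq_neg_iff_add_eq_zero]
          calc (g⁻¹).val.val + (g.val.val + g.val.val * (g⁻¹).val.val)
              = (g⁻¹).val.val + g.val.val + g.val.val * (g⁻¹).val.val := by abel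
            _ = 0 := h0
        rw [heq]
        exact neg_mem (add_mem hg (hmono k (hmulR k _ hg _))) }
  have key : ∀ k, (⊤ : Subgroup (AdjointGroup R)).lowerCentralSeries k ≤ H k := by
    intro k
    induction k with
    | zero => exact fun g _ => hJ0 _
    | succ k ih =>
      rw [Subgroup.lowerCentralSeries_succ]
      apply (Subgroup.closure_le _).mpr
      rintro x ⟨g, hg, h, -, rfl⟩
      show ⁅g, h⁆ ∈ H (k + 1)
      have hc : g.val.val ∈ J k := ih hg
      -- abbreviations
      set c := g.val.val with hcdef
      set b := h.val.val with hbdef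
      set q := ((h * g)⁻¹ : AdjointGroup R) with hqdef
      have hcomm : ⁅g, h⁆ = (g * h) * (h * g)⁻¹ := by group
      have hu : (g * h).val.val = b + c + c * b := rfl
      have hv : (h * g).val.val = c + b + b * c := rfl
      have h0 := PreQuasiregular.inv_add_add_mul_eq_zero (h * g)
      -- h0 : q.val.val + (h*g).val.val + (h*g).val.val * q.val.val = 0
      have hwval : ⁅g, h⁆.val.val =
          ((g * h).val.val - (h * g).val.val)
            + ((g * h).val.val - (h * g).val.val) * q.val.val := by
        rw [hcomm]
        have : ((g * h) * q).val.val
            = q.val.val + (g * h).val.val + (g * h).val.val * q.val.val := rfl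
        rw [this]
        have expand : q.val.val + (g * h).val.val + (g * h).val.val * q.val.val
            = (((g * h).val.val - (h * g).val.val)
                + ((g * h).val.val - (h * g).val.val) * q.val.val)
              + (q.val.val + (h * g).val.val + (h * g).val.val * q.val.val) := by
          rw [sub_mul]; abel
        rw [expand, h0, add_zero]
      have hd : (g * h).val.val - (h * g).val.val ∈ J (k + 1) := by
        have : (g * h).val.val - (h * g).val.val = c * b - b * c := by
          rw [hu, hv]; abel
        rw [this]
        exact sub_mem (hmulR k c hc b) (hmulL k c hc b)
      show ⁅g, h⁆.val.val ∈ J (k + 1)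
      rw [hwval]
      exact add_mem hd (hmono _ (hmulR _ _ hd _))
  rw [eq_bot_iff]
  intro g hg
  have hzero : g.val.val = 0 := hJm _ (key m hg)
  have : g = 1 := by
    apply Units.ext
    apply PreQuasiregular.equiv.symm.injective
    simpa using hzero
  simpa [Subgroup.mem_bot] using this

section Left

variable (p m : ℕ)

/-- Left-associated products of `k + 1` elements. -/
def leftS (k : ℕ) : Set R := {x | ∃ (a : R) (l : List R), l.length = k ∧ x = l.foldl (· * ·) a}

lemma foldl_mul_left (b a : R) (l : List R) :
    b * l.foldl (· * ·) a = l.foldl (· * ·) (b * a) := by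
  induction l generalizing a with
  | nil => rfl
  | cons c l ih => rw [List.foldl_cons, List.foldl_cons, ih, mul_assoc]

lemma leftS_zero (x : R) : x ∈ leftS 0 := ⟨x, [], rfl, rfl⟩

lemma leftS_mono {k : ℕ} {x : R} (hx : x ∈ (leftS (k + 1) : Set R)) : x ∈ (leftS k : Set R) := by
  obtain ⟨a, l, hl, rfl⟩ := hx
  cases l with
  | nil => simp at hl
  | cons c l => exact ⟨a * c, l, by simpa using hl, rfl⟩

lemma leftS_mulL {k : ℕ} {x : R} (hx : x ∈ (leftS k : Set R)) (b : R) :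
    b * x ∈ (leftS (k + 1) : Set R) := by
  obtain ⟨a, l, hl, rfl⟩ := hx
  exact ⟨b, a :: l, by simpa using hl, by rw [List.foldl_cons, ← foldl_mul_left]⟩

lemma leftS_mulR {k : ℕ} {x : R} (hx : x ∈ (leftS k : Set R)) (b : R) :
    x * b ∈ (leftS (k + 1) : Set R) := by
  obtain ⟨a, l, hl, rfl⟩ := hx
  exact ⟨a, l ++ [b], by simpa using hl, by rw [List.foldl_append, List.foldl_cons]; rfl⟩

lemma leftS_order (hexp : AddMonoid.exponent R = p ^ m) (hL : IsLeftPNil p R) :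
    ∀ k, ∀ x ∈ (leftS k : Set R), p ^ (m - k) • x = 0 := by
  intro k
  induction k with
  | zero =>
    rintro x ⟨a, l, hl, rfl⟩
    rw [List.length_eq_zero_iff] at hl
    subst hl
    rw [Nat.sub_zero, ← hexp]
    exact AddMonoid.exponent_nsmul_eq_zero _
  | succ k ih =>
    rintro x ⟨a, l, hl, rfl⟩
    rcases l.eq_nil_or_concat with rfl | ⟨L, bb, rfl⟩
    · simp at hl
    · have hLlen : L.length = k := by simpa using hl
      have hy : L.foldl (· * ·) a ∈ (leftS k : Set R) := ⟨a, L, hLlen, rfl⟩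
      set y := L.foldl (· * ·) a with hydef
      have hyk : p ^ (m - k) • y = 0 := ih y hy
      have hpz : p • (p ^ (m - (k + 1)) • y) = 0 := by
        rw [smul_smul, ← pow_succ']
        exact pow_smul_absorb (by omega) hyk
      have hz : (p ^ (m - (k + 1)) • y) * bb = 0 := hL _ (pcond hpz) bb
      have hxeq : (L.concat bb).foldl (· * ·) a = y * bb := by
        rw [List.concat_eq_append, List.foldl_append, List.foldl_cons]; rfl
      rw [hxeq]
      calc p ^ (m - (k + 1)) • (y * bb)
          = (AddMonoidHom.mulRight bb) (p ^ (m - (k + 1)) • y) := by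
            rw [AddMonoidHom.map_nsmul]; rfl
        _ = 0 := by rw [show (AddMonoidHom.mulRight bb) (p ^ (m - (k + 1)) • y)
              = (p ^ (m - (k + 1)) • y) * bb from rfl, hz]

end Left

section Right

variable (p m : ℕ)

/-- Right-associated products of `k + 1` elements. -/
def rightS (k : ℕ) : Set R := {x | ∃ (a : R) (l : List R), l.length = k ∧ x = l.foldr (· * ·) a}

lemma foldr_mul_right (a b : R) (l : List R) :
    l.foldr (· * ·) a * b = l.foldr (· * ·) (a * b) := by
  induction l with
  | nil => rfl
  | cons c l ih => rw [List.foldr_cons, List.foldr_cons, mul_assoc, ih]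

lemma rightS_zero (x : R) : x ∈ rightS 0 := ⟨x, [], rfl, rfl⟩

lemma rightS_mono {k : ℕ} {x : R} (hx : x ∈ (rightS (k + 1) : Set R)) :
    x ∈ (rightS k : Set R) := by
  obtain ⟨a, l, hl, rfl⟩ := hx
  rcases l.eq_nil_or_concat with rfl | ⟨L, bb, rfl⟩
  · simp at hl
  · refine ⟨bb * a, L, by simpa using hl, ?_⟩
    rw [List.concat_eq_append, List.foldr_append, List.foldr_cons, List.foldr_nil]

lemma rightS_mulL {k : ℕ} {x : R} (hx : x ∈ (rightS k : Set R)) (b : R) :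
    b * x ∈ (rightS (k + 1) : Set R) := by
  obtain ⟨a, l, hl, rfl⟩ := hx
  exact ⟨a, b :: l, by simpa using hl, by rw [List.foldr_cons]⟩

lemma rightS_mulR {k : ℕ} {x : R} (hx : x ∈ (rightS k : Set R)) (b : R) :
    x * b ∈ (rightS (k + 1) : Set R) := by
  obtain ⟨a, l, hl, rfl⟩ := hx
  refine ⟨b, l ++ [a], by simpa using hl, ?_⟩
  rw [List.foldr_append, List.foldr_cons, List.foldr_nil, foldr_mul_right]

lemma rightS_order (hexp : AddMonoid.exponent R = p ^ m) (hR : IsRightPNil p R) :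
    ∀ k, ∀ x ∈ (rightS k : Set R), p ^ (m - k) • x = 0 := by
  intro k
  induction k with
  | zero =>
    rintro x ⟨a, l, hl, rfl⟩
    rw [List.length_eq_zero_iff] at hl
    subst hl
    rw [Nat.sub_zero, ← hexp]
    exact AddMonoid.exponent_nsmul_eq_zero _
  | succ k ih =>
    rintro x ⟨a, l, hl, rfl⟩
    cases l with
    | nil => simp at hl
    | cons c l =>
      have hllen : l.length = k := by simpa using hl
      have hy : l.foldr (· * ·) a ∈ (rightS k : Set R) := ⟨a, l, hllen, rfl⟩
      set y := l.foldr (· * ·) a with hydef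
      have hyk : p ^ (m - k) • y = 0 := ih y hy
      have hpz : p • (p ^ (m - (k + 1)) • y) = 0 := by
        rw [smul_smul, ← pow_succ']
        exact pow_smul_absorb (by omega) hyk
      have hz : c * (p ^ (m - (k + 1)) • y) = 0 := hR _ (pcond hpz) c
      have hxeq : (c :: l).foldr (· * ·) a = c * y := rfl
      rw [hxeq]
      calc p ^ (m - (k + 1)) • (c * y)
          = (AddMonoidHom.mulLeft c) (p ^ (m - (k + 1)) • y) := by
            rw [AddMonoidHom.map_nsmul]; rfl
        _ = 0 := by rw [show (AddMonoidHom.mulLeft c) (p ^ (m - (k + 1)) • y)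
              = c * (p ^ (m - (k + 1)) • y) from rfl, hz]

end Right

/-- Package a family of sets with the right closure properties into the chain of
additive subgroups needed for `lcs_le_of_chain`. -/
lemma main_of_sets (p m : ℕ) (S : ℕ → Set R)
    (hS0 : ∀ x : R, x ∈ S 0)
    (hSmono : ∀ k, S (k + 1) ⊆ S k)
    (hSmulL : ∀ k, ∀ x ∈ S k, ∀ b : R, b * x ∈ S (k + 1))
    (hSmulR : ∀ k, ∀ x ∈ S k, ∀ b : R, x * b ∈ S (k + 1))
    (hSord : ∀ k, ∀ x ∈ S k, p ^ (m - k) • x = 0) :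
    (⊤ : Subgroup (AdjointGroup R)).lowerCentralSeries m = ⊥ := by
  refine lcs_le_of_chain m (fun k => AddSubgroup.closure (S k)) ?_ ?_ ?_ ?_ ?_
  · intro x
    exact AddSubgroup.subset_closure (hS0 x)
  · intro k
    exact AddSubgroup.closure_mono (hSmono k)
  · intro k x hx b
    have hle : AddSubgroup.closure (S k)
        ≤ (AddSubgroup.closure (S (k + 1))).comap (AddMonoidHom.mulLeft b) :=
      (AddSubgroup.closure_le _).mpr fun y hy =>
        AddSubgroup.subset_closure (hSmulL k y hy b)
    exact hle hx
  · intro k x hx b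
    have hle : AddSubgroup.closure (S k)
        ≤ (AddSubgroup.closure (S (k + 1))).comap (AddMonoidHom.mulRight b) :=
      (AddSubgroup.closure_le _).mpr fun y hy =>
        AddSubgroup.subset_closure (hSmulR k y hy b)
    exact hle hx
  · intro x hx
    have hle : AddSubgroup.closure (S m) ≤ (⊥ : AddSubgroup R) :=
      (AddSubgroup.closure_le _).mpr fun y hy => by
        have := hSord m y hy
        rw [Nat.sub_self, pow_zero, one_smul] at this
        simpa [AddSubgroup.mem_bot] using this
    simpa [AddSubgroup.mem_bot] using hle hx

end PNilAux

/-- **Theorem 2.2 (group part).** Let `R` be a ring whose additive group has finite exponent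
`p ^ m`. If `R` is left or right `p`-nil, then the adjoint group `R∘` is nilpotent of class at
most `m`. -/
theorem pNil_adjointGroup_nilpotent (p m : ℕ) (hp : p.Prime) (R : Type*) [NonUnitalRing R]
    (hexp : AddMonoid.exponent R = p ^ m)
    (hnil : IsLeftPNil p R ∨ IsRightPNil p R) :
    (⊤ : Subgroup (AdjointGroup R)).lowerCentralSeries m = ⊥ := by
  rcases hnil with hL | hR
  · exact PNilAux.main_of_sets p m PNilAux.leftS (PNilAux.leftS_zero)
      (fun k _ hx => PNilAux.leftS_mono hx)
      (fun k x hx b => PNilAux.leftS_mulL hx b)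
      (fun k x hx b => PNilAux.leftS_mulR hx b)
      (PNilAux.leftS_order p m hexp hL)
  · exact PNilAux.main_of_sets p m PNilAux.rightS (PNilAux.rightS_zero)
      (fun k _ hx => PNilAux.rightS_mono hx)
      (fun k x hx b => PNilAux.rightS_mulL hx b)
      (fun k x hx b => PNilAux.rightS_mulR hx b)
      (PNilAux.rightS_order p m hexp hR)
end

section
/- Let p be a prime and let R be a left p-nil (respectively right p-nil) ring. Then for every n ≥ 1, the subgroup Ω_n(R^+) = {x ∈ R : p^n·x = 0} is a two-sided ideal of R and the quotient ring R/Ω_n(R^+) is left p-nil (respectively right p-nil). -/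
/-- `Ω_n(R⁺)` as a two-sided ideal. -/
def omegaIdeal (p n : ℕ) (R : Type*) [NonUnitalRing R] : TwoSidedIdeal R :=
  TwoSidedIdeal.mk' {x : R | p ^ n • x = 0}
    (by simp)
    (fun {x y} hx hy => by simp only [Set.mem_setOf_eq, smul_add] at *; rw [hx, hy, add_zero])
    (fun {x} hx => by simp only [Set.mem_setOf_eq, smul_neg] at *; rw [hx, neg_zero])
    (fun {x y} hy => by
      simp only [Set.mem_setOf_eq] at *
      rw [← mul_smul_comm, hy, mul_zero])
    (fun {x y} hx => by
      simp only [Set.mem_setOf_eq] at *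
      rw [← smul_mul_assoc, hx, zero_mul])

lemma mem_omegaIdeal {p n : ℕ} {R : Type*} [NonUnitalRing R] (x : R) :
    x ∈ omegaIdeal p n R ↔ p ^ n • x = 0 := by
  simp [omegaIdeal]

lemma omega_quot_eq_zero {p n : ℕ} {R : Type*} [NonUnitalRing R] (x : R) :
    (x : (omegaIdeal p n R).ringCon.Quotient) = 0 ↔ p ^ n • x = 0 := by
  constructor
  · intro h
    have : (omegaIdeal p n R).ringCon x 0 := Quotient.exact h
    rw [TwoSidedIdeal.rel_iff, sub_zero, mem_omegaIdeal] at this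
    exact this
  · intro h
    have : (omegaIdeal p n R).ringCon x 0 := by
      rw [TwoSidedIdeal.rel_iff, sub_zero, mem_omegaIdeal]; exact h
    exact Quotient.sound this

/-- **Lemma 2.3.** If `R` is a left (resp. right) `p`-nil ring, then for every `n ≥ 1` the set
`Ω_n(R⁺) = {x : R | p ^ n • x = 0}` is a two-sided ideal of `R` and the quotient ring
`R / Ω_n(R⁺)` is left (resp. right) `p`-nil. -/
theorem quotient_omega_pNil (p n : ℕ) (hp : p.Prime) (hn : 1 ≤ n)
    (R : Type*) [NonUnitalRing R] :
    (IsLeftPNil p R → ∃ I : TwoSidedIdeal R, (I : Set R) = {x : R | p ^ n • x = 0} ∧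
      IsLeftPNil p I.ringCon.Quotient) ∧
    (IsRightPNil p R → ∃ I : TwoSidedIdeal R, (I : Set R) = {x : R | p ^ n • x = 0} ∧
      IsRightPNil p I.ringCon.Quotient) := by
  constructor
  · intro h
    refine ⟨omegaIdeal p n R, by simp [omegaIdeal], ?_⟩
    intro x hx y
    induction x using Quotient.inductionOn with
    | h a =>
      induction y using Quotient.inductionOn with
      | h b =>
        set c : ℕ := if p = 2 then 4 else p with hc
        have hx' : ((c • a : R) : (omegaIdeal p n R).ringCon.Quotient) = 0 := hx
        rw [omega_quot_eq_zero] at hx'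
        have hca : c • (p ^ n • a) = 0 := by rw [smul_comm]; exact hx'
        have := h (p ^ n • a) hca b
        rw [smul_mul_assoc] at this
        exact (omega_quot_eq_zero (a * b)).2 this
  · intro h
    refine ⟨omegaIdeal p n R, by simp [omegaIdeal], ?_⟩
    intro x hx y
    induction x using Quotient.inductionOn with
    | h a =>
      induction y using Quotient.inductionOn with
      | h b =>
        set c : ℕ := if p = 2 then 4 else p with hc
        have hx' : ((c • a : R) : (omegaIdeal p n R).ringCon.Quotient) = 0 := hx
        rw [omega_quot_eq_zero] at hx'
        have hca : c • (p ^ n • a) = 0 := by rw [smul_comm]; exact hx'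
        have := h (p ^ n • a) hca b
        rw [mul_smul_comm] at this
        exact (omega_quot_eq_zero (b * a)).2 this
end

section
/- Let p be a prime and let R be a nonzero finite left p-nil ring whose additive group is a p-group. Let U be the intersection of the right annihilator {x ∈ R : y·x = 0 for all y ∈ R} of R with Ω_1(R^+) = {x ∈ R : p·x = 0}. Then U is a nonzero two-sided ideal of R and the quotient ring R/U is left p-nil. -/
private lemma nsmul_mul_assoc' {R : Type*} [NonUnitalRing R] (n : ℕ) (a b : R) :
    (n • a) * b = n • (a * b) := by
  induction n with
  | zero => simp
  | succ n ih => simp [succ_nsmul, add_mul, ih]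

private lemma mul_nsmul_assoc' {R : Type*} [NonUnitalRing R] (n : ℕ) (a b : R) :
    a * (n • b) = n • (a * b) := by
  induction n with
  | zero => simp
  | succ n ih => simp [succ_nsmul, mul_add, ih]

/-- **Lemma 2.4.** Let `R` be a nonzero finite left `p`-nil ring whose additive group is a
`p`-group, and let `U` be the intersection of the right annihilator of `R` with
`Ω₁(R⁺) = {x : R | p • x = 0}`. Then `U` is a nonzero two-sided ideal of `R` and the quotient
ring `R / U` is left `p`-nil. -/
theorem rightAnnihilator_inter_omega_ideal (p : ℕ) (hp : p.Prime)
    (R : Type*) [NonUnitalRing R] [Finite R] [Nontrivial R]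
    (hpR : ∀ x : R, ∃ k : ℕ, p ^ k • x = 0)
    (hl : IsLeftPNil p R) :
    ∃ U : TwoSidedIdeal R,
      (U : Set R) = {x : R | (∀ y : R, y * x = 0) ∧ p • x = 0} ∧
      (∃ u ∈ U, u ≠ (0 : R)) ∧
      IsLeftPNil p U.ringCon.Quotient := by
  classical
  -- every element killed by p is a left annihilator
  have keyB : ∀ a : R, p • a = 0 → ∀ y : R, a * y = 0 := by
    intro a ha y
    apply hl a _ y
    by_cases h2 : p = 2
    · have h4 : (if p = 2 then 4 else p) = 4 := by simp [h2]
      have h2a : (2:ℕ) • a = 0 := by rw [← h2]; exact ha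
      rw [h4, show (4:ℕ) = 2*2 from rfl, mul_smul, h2a, smul_zero]
    · simpa [h2] using ha
  -- the ideal
  set S : Set R := {x : R | (∀ y : R, y * x = 0) ∧ p • x = 0} with hS
  have hS0 : (0:R) ∈ S := ⟨fun y => mul_zero y, smul_zero p⟩
  have hSadd : ∀ {x y : R}, x ∈ S → y ∈ S → x + y ∈ S := fun hx hy =>
    ⟨fun z => by rw [mul_add, hx.1 z, hy.1 z, add_zero],
      by rw [smul_add, hx.2, hy.2, add_zero]⟩
  have hSneg : ∀ {x : R}, x ∈ S → -x ∈ S := fun hx =>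
    ⟨fun z => by rw [mul_neg, hx.1 z, neg_zero], by rw [smul_neg, hx.2, neg_zero]⟩
  have hSl : ∀ {x y : R}, y ∈ S → x * y ∈ S := fun {x y} hy =>
    ⟨fun z => by rw [← mul_assoc, hy.1 (z * x)],
      by rw [← mul_nsmul_assoc', hy.2, mul_zero]⟩
  have hSr : ∀ {x y : R}, x ∈ S → x * y ∈ S := fun {x y} hx =>
    ⟨fun z => by rw [← mul_assoc, hx.1 z, zero_mul],
      by rw [← nsmul_mul_assoc', hx.2, zero_mul]⟩
  set U : TwoSidedIdeal R := TwoSidedIdeal.mk' S hS0 hSadd hSneg hSl hSr with hU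
  have hmemU : ∀ x : R, x ∈ U ↔ x ∈ S := fun x => TwoSidedIdeal.mem_mk' S _ _ _ _ _ x
  refine ⟨U, TwoSidedIdeal.coe_mk' _ _ _ _ _ _, ?_, ?_⟩
  · -- nonzero
    -- uniform exponent
    have := Fintype.ofFinite R
    choose f hf using hpR
    set k := Finset.univ.sup f with hk
    have hkall : ∀ x : R, p ^ k • x = 0 := by
      intro x
      have hle : f x ≤ k := Finset.le_sup (Finset.mem_univ x)
      calc p ^ k • x = p ^ (k - f x) • (p ^ (f x) • x) := by
            rw [← mul_smul, ← pow_add, Nat.sub_add_cancel hle]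
        _ = 0 := by rw [hf, smul_zero]
    -- exponent decreasing under right multiplication
    have key2 : ∀ (j : ℕ) (a r : R), p ^ j • a = 0 → p ^ (j - 1) • (a * r) = 0 := by
      intro j a r ha
      cases j with
      | zero =>
        simp only [pow_zero, one_smul] at ha
        simp [ha]
      | succ m =>
        have h1 : p • (p ^ m • a) = 0 := by
          rw [← mul_smul, ← pow_succ']
          exact ha
        have := keyB (p ^ m • a) h1 r
        rw [nsmul_mul_assoc'] at this
        simpa using this
    -- foldl products vanish
    have claimD : ∀ (l : List R) (j : ℕ) (a : R), p ^ j • a = 0 →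
        p ^ (j - l.length) • (l.foldl (· * ·) a) = 0 := by
      intro l
      induction l with
      | nil => intro j a ha; simpa using ha
      | cons r l ih =>
        intro j a ha
        have := ih (j - 1) (a * r) (key2 j a r ha)
        simpa [Nat.sub_sub, add_comm 1 l.length] using this
    have foldF : ∀ (l : List R) (a b : R),
        a * l.foldl (· * ·) b = l.foldl (· * ·) (a * b) := by
      intro l
      induction l with
      | nil => intro a b; rfl
      | cons c l ih => intro a b; simp only [List.foldl_cons, ih, mul_assoc]
    have foldE : ∀ (tl : List R) (hd x : R),
        (hd :: tl).foldr (· * ·) x = (tl.foldl (· * ·) hd) * x := by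
      intro tl
      induction tl with
      | nil => intro hd x; rfl
      | cons r tl ih =>
        intro hd x
        simp only [List.foldr_cons] at *
        rw [ih r x, ← mul_assoc, List.foldl_cons, foldF]
    have hfoldzero : ∀ (l : List R) (x : R), p • x = 0 → k + 1 ≤ l.length →
        l.foldr (· * ·) x = 0 := by
      intro l x hx hlen
      match l with
      | hd :: tl =>
        rw [foldE]
        have htl : k ≤ tl.length := by simpa using hlen
        have := claimD tl k hd (hkall hd)
        rw [Nat.sub_eq_zero_of_le htl, pow_zero, one_smul] at this
        rw [this, zero_mul]
    -- main descent
    have main : ∀ n : ℕ, ∀ x : R, x ≠ 0 → p • x = 0 →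
        (∀ l : List R, n ≤ l.length → l.foldr (· * ·) x = 0) →
        ∃ u : R, u ≠ 0 ∧ (∀ y : R, y * u = 0) ∧ p • u = 0 := by
      intro n
      induction n with
      | zero =>
        intro x hx hpx hfold
        exact absurd (hfold [] (Nat.zero_le _)) hx
      | succ n ih =>
        intro x hx hpx hfold
        by_cases hall : ∀ y : R, y * x = 0
        · exact ⟨x, hx, hall, hpx⟩
        · push_neg at hall
          obtain ⟨r, hr⟩ := hall
          refine ih (r * x) hr (by rw [← mul_nsmul_assoc', hpx, mul_zero]) ?_
          intro l hlen
          have := hfold (l ++ [r]) (by simp; omega)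
          rwa [List.foldr_append, List.foldr_cons, List.foldr_nil] at this
    -- element of additive order p
    obtain ⟨x, hx⟩ := exists_ne (0 : R)
    have hex : ∃ m : ℕ, p ^ m • x = 0 := ⟨f x, hf x⟩
    set m := Nat.find hex with hm
    have hm0 : m ≠ 0 := by
      intro h
      have := Nat.find_spec hex
      rw [← hm, h, pow_zero, one_smul] at this
      exact hx this
    have ha_ne : p ^ (m - 1) • x ≠ 0 := Nat.find_min hex (Nat.sub_lt (Nat.pos_of_ne_zero hm0) one_pos)
    have ha_p : p • (p ^ (m - 1) • x) = 0 := by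
      rw [← mul_smul, ← pow_succ', Nat.sub_add_cancel (Nat.one_le_iff_ne_zero.mpr hm0)]
      exact Nat.find_spec hex
    obtain ⟨u, hu0, hu1, hu2⟩ := main (k + 1) (p ^ (m - 1) • x) ha_ne ha_p
      (fun l hlen => hfoldzero l _ ha_p hlen)
    exact ⟨u, (hmemU u).mpr ⟨hu1, hu2⟩, hu0⟩
  · -- quotient is left p-nil
    have coe_nsmul : ∀ (n : ℕ) (x : R),
        (↑(n • x) : U.ringCon.Quotient) = n • (↑x : U.ringCon.Quotient) := by
      intro n x
      induction n with
      | zero => simp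
      | succ n ih => rw [succ_nsmul, RingCon.coe_add, ih, succ_nsmul]
    have coe_eq_zero : ∀ x : R, (↑x : U.ringCon.Quotient) = 0 ↔ x ∈ S := by
      intro x
      rw [← RingCon.coe_zero, RingCon.eq, show U.ringCon x 0 ↔ x - 0 ∈ U from
        TwoSidedIdeal.rel_iff U x 0, sub_zero, hmemU]
    intro xq hxq yq
    obtain ⟨x⟩ := xq
    obtain ⟨y⟩ := yq
    have hx' : (if p = 2 then 4 else p) • x ∈ S := by
      rw [← coe_eq_zero, coe_nsmul]
      exact hxq
    show (↑x : U.ringCon.Quotient) * ↑y = 0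
    rw [← RingCon.coe_mul, coe_eq_zero]
    constructor
    · intro z
      rw [← mul_assoc]
      apply hl (z * x) _ y
      rw [← mul_nsmul_assoc']
      exact hx'.1 z
    · rw [← nsmul_mul_assoc']
      apply hl (p • x) _ y
      rw [smul_comm]
      exact hx'.2
end

section
/- Let p be a prime, G a finite p-group, and S = Z(G) ∩ P(G). Then the ring Hom(G, S) of group homomorphisms from G into S, with addition (h + k)(x) = h(x)·k(x) and multiplication (h·k)(x) = k(h(x)), is right p-nil: every h ∈ Hom(G, S) with p·h = 0 (with 4·h = 0 when p = 2) satisfies k·h = 0 for all k ∈ Hom(G, S). -/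
/-- `P(G)`: the subgroup `γ₂(G)·G^p` for odd `p`, and `γ₂(G)·G⁴` for `p = 2`, where `G^m` is the
subgroup generated by `m`-th powers. -/
def groupP (p : ℕ) (G : Type*) [Group G] : Subgroup G :=
  commutator G ⊔ Subgroup.closure {x : G | ∃ g : G, g ^ (if p = 2 then 4 else p) = x}

/-- `Aut_N(G)`: the group of automorphisms `u` of `G` such that `x⁻¹ · u x ∈ N` for all `x`. -/
def autSub {G : Type*} [Group G] (N : Subgroup G) : Subgroup (G ≃* G) where
  carrier := {u : G ≃* G | ∀ x : G, x⁻¹ * u x ∈ N}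
  one_mem' := by
    intro x
    simpa using N.one_mem
  mul_mem' := by
    intro u v hu hv x
    have h := N.mul_mem (hv x) (hu (v x))
    simpa [MulAut.mul_apply, mul_assoc] using h
  inv_mem' := by
    intro u hu x
    have h := N.inv_mem (hu (u⁻¹ x))
    have hx : u (u⁻¹ x) = x := by
      simp [MulAut.inv_def]
    rw [hx] at h
    simpa [mul_inv_rev] using h

/-- **Proposition 3.1(a).** Let `G` be a finite `p`-group and `S = Z(G) ∩ P(G)`. The ring
`Hom(G, S)` (with pointwise addition and multiplication `(h·k)(x) = k(h(x))`) is right `p`-nil: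
every `h` with `p·h = 0` (i.e. `(h x)^p = 1` for all `x`; `(h x)^4 = 1` when `p = 2`) satisfies
`k·h = 0` (i.e. `h(k x) = 1` for all `x`) for every `k`. -/
theorem homRing_isRightPNil (p : ℕ) (hp : p.Prime) (G : Type*) [Group G] [Finite G]
    (hG : IsPGroup p G) :
    ∀ h : G →* ↥(Subgroup.center G ⊓ groupP p G),
      (∀ x : G, (h x) ^ (if p = 2 then 4 else p) = 1) →
      ∀ k : G →* ↥(Subgroup.center G ⊓ groupP p G), ∀ x : G, h ↑(k x) = 1 := by
  intro h hh k x
  have hker : groupP p G ≤ h.ker := by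
    apply sup_le
    · rw [commutator_def, Subgroup.commutator_le]
      intro a _ b _
      open scoped commutatorElement in
      have : h ⁅a, b⁆ = ⁅h a, h b⁆ := map_commutatorElement h a b
      rw [MonoidHom.mem_ker, this]
      have hc : Commute (h a) (h b) := by
        ext
        exact (Subgroup.mem_center_iff.mp (h a).2.1 _).symm
      exact hc.commutator_eq
    · rw [Subgroup.closure_le]
      rintro _ ⟨g, rfl⟩
      simp only [SetLike.mem_coe, MonoidHom.mem_ker, map_pow]
      exact hh g
  exact hker (k x).2.2
end

section
/- Let p be a prime, G a finite p-group, and S = Z(G) ∩ P(G). Then for every n ≥ 1, the subgroup Ω_n(Aut_S(G)) generated by the elements of Aut_S(G) of order dividing p^n coincides with the set of all elements of Aut_S(G) of order dividing p^n, and both are equal to Aut_{Ω_n(S)}(G), where Ω_n(S) = {z ∈ S : z^{p^n} = 1}. -/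
open scoped IsMulCommutative

section Core
variable {G : Type*} [Group G]

/-- The homomorphism `x ↦ x⁻¹ * u x` attached to a central automorphism. -/
def autf (u : G ≃* G) (hc : ∀ x : G, x⁻¹ * u x ∈ Subgroup.center G) : G →* G where
  toFun x := x⁻¹ * u x
  map_one' := by simp
  map_mul' x y := by
    have hx := Subgroup.mem_center_iff.mp (hc x)
    have := hx (y⁻¹)
    -- (x*y)⁻¹ * u (x*y) = y⁻¹ * (x⁻¹ * u x) * u y
    simp only [map_mul, mul_inv_rev]
    calc y⁻¹ * x⁻¹ * (u x * u y) = y⁻¹ * (x⁻¹ * u x) * u y := by group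
      _ = (x⁻¹ * u x) * y⁻¹ * u y := by rw [this]
      _ = x⁻¹ * u x * (y⁻¹ * u y) := by group

lemma autf_apply (u : G ≃* G) (hc : ∀ x : G, x⁻¹ * u x ∈ Subgroup.center G) (x : G) :
    u x = x * autf u hc x := by
  simp [autf]

lemma autf_mem_center (u : G ≃* G) (hc : ∀ x : G, x⁻¹ * u x ∈ Subgroup.center G)
    (x : G) : autf u hc x ∈ Subgroup.center G := hc x

lemma autf_iterate_mem_center (u : G ≃* G) (hc : ∀ x : G, x⁻¹ * u x ∈ Subgroup.center G)
    (i : ℕ) (x : G) : (autf u hc)^[i + 1] x ∈ Subgroup.center G := by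
  rw [Function.iterate_succ_apply']
  exact hc _

/-- `autf` restricted-corestricted to the center. -/
def autfc (u : G ≃* G) (hc : ∀ x : G, x⁻¹ * u x ∈ Subgroup.center G) :
    ↥(Subgroup.center G) →* ↥(Subgroup.center G) :=
  MonoidHom.codRestrict ((autf u hc).domRestrict (Subgroup.center G)) (Subgroup.center G)
    (fun z => hc _)

lemma autfc_coe (u : G ≃* G) (hc : ∀ x : G, x⁻¹ * u x ∈ Subgroup.center G)
    (z : ↥(Subgroup.center G)) : (autfc u hc z : G) = autf u hc (z : G) := rfl

/-- The sequence of iterated values, in the center. -/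
def autS (u : G ≃* G) (hc : ∀ x : G, x⁻¹ * u x ∈ Subgroup.center G) (x : G) (i : ℕ) :
    ↥(Subgroup.center G) :=
  ⟨(autf u hc)^[i + 1] x, autf_iterate_mem_center u hc i x⟩

lemma autS_succ (u : G ≃* G) (hc : ∀ x : G, x⁻¹ * u x ∈ Subgroup.center G) (x : G) (i : ℕ) :
    autS u hc x (i + 1) = autfc u hc (autS u hc x i) := by
  apply Subtype.ext
  rw [autfc_coe]
  show (autf u hc)^[i + 1 + 1] x = autf u hc ((autf u hc)^[i + 1] x)
  rw [Function.iterate_succ_apply']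

/-- The key binomial formula for powers of a central automorphism. -/
lemma pow_apply_formula (u : G ≃* G) (hc : ∀ x : G, x⁻¹ * u x ∈ Subgroup.center G)
    (k : ℕ) (x : G) :
    (u ^ k) x = x * ↑(∏ i ∈ Finset.range k, (autS u hc x i) ^ (k.choose (i + 1))) := by
  induction k with
  | zero => simp
  | succ k ih =>
    have h1 : (u ^ (k + 1)) x = u ((u ^ k) x) := by
      rw [pow_succ']
      rfl
    set F := autf u hc with hF
    set P := ∏ i ∈ Finset.range k, (autS u hc x i) ^ (k.choose (i + 1)) with hP
    have h2 : u ((u ^ k) x) = (u ^ k) x * F ((u ^ k) x) := autf_apply u hc _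
    have h3 : F ((u ^ k) x) = F x * ↑(autfc u hc P) := by
      rw [ih, map_mul]
      congr 1
    have h4 : autfc u hc P = ∏ i ∈ Finset.range k, (autS u hc x (i + 1)) ^ (k.choose (i + 1)) := by
      rw [hP, map_prod]
      refine Finset.prod_congr rfl (fun i _ => ?_)
      rw [map_pow, autS_succ]
    -- now expand the RHS
    have hR : ∏ i ∈ Finset.range (k + 1), (autS u hc x i) ^ ((k + 1).choose (i + 1))
        = P * ((∏ i ∈ Finset.range k, (autS u hc x (i + 1)) ^ (k.choose (i + 1))) * autS u hc x 0) := by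
      have e1 : ∀ i ∈ Finset.range (k + 1),
          (autS u hc x i) ^ ((k + 1).choose (i + 1))
            = (autS u hc x i) ^ (k.choose (i + 1)) * (autS u hc x i) ^ (k.choose i) := by
        intro i _
        rw [Nat.choose_succ_succ', Nat.add_comm, pow_add]
      rw [Finset.prod_congr rfl e1, Finset.prod_mul_distrib]
      congr 1
      · -- ∏_{i<k+1} s_i^{C(k,i+1)} = P
        rw [Finset.prod_range_succ, Nat.choose_eq_zero_of_lt (by omega), pow_zero, mul_one]
      · -- ∏_{i<k+1} s_i^{C(k,i)} = Q * s_0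
        rw [Finset.prod_range_succ']
        simp
    rw [h1, h2, h3, ih, hR, h4]
    push_cast [mul_assoc]
    congr 1
    -- x * (↑P * (F x * ↑Q)) = x * (↑P * (↑Q * F x))  with Q central
    congr 1
    set Q := ∏ i ∈ Finset.range k, (autS u hc x (i + 1)) ^ (k.choose (i + 1)) with hQ
    have hQc : (Q : G) ∈ Subgroup.center G := Q.2
    exact Subgroup.mem_center_iff.mp hQc (F x)

end Core

section Deep
variable {G : Type*} [Group G] {p : ℕ}

lemma autf_P (u : G ≃* G) (hu : ∀ x : G, x⁻¹ * u x ∈ Subgroup.center G ⊓ groupP p G)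
    {y : G} (hy : y ∈ groupP p G) :
    ∃ a, (∃ w, autf u (fun x => (hu x).1) w = a) ∧
      autf u (fun x => (hu x).1) y = a ^ (if p = 2 then 4 else p) := by
  set F := autf u (fun x => (hu x).1) with hF
  set m := (if p = 2 then 4 else p) with hm
  set K : Subgroup G :=
    { carrier := {y : G | ∃ a, (∃ w, F w = a) ∧ F y = a ^ m}
      one_mem' := ⟨1, ⟨1, map_one F⟩, by rw [map_one, one_pow]⟩
      mul_mem' := by
        rintro y z ⟨a, ⟨w1, hw1⟩, hya⟩ ⟨b, ⟨w2, hw2⟩, hzb⟩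
        refine ⟨a * b, ⟨w1 * w2, by rw [map_mul, hw1, hw2]⟩, ?_⟩
        have hbc : b ∈ Subgroup.center G := by rw [← hw2]; exact (hu w2).1
        have hcomm : Commute a b := Subgroup.mem_center_iff.mp hbc a
        rw [map_mul, hya, hzb, hcomm.mul_pow]
      inv_mem' := by
        rintro y ⟨a, ⟨w, hw⟩, hya⟩
        exact ⟨a⁻¹, ⟨w⁻¹, by rw [map_inv, hw]⟩, by rw [map_inv, hya, inv_pow]⟩ } with hK
  suffices hle : groupP p G ≤ K from hle hy
  rw [groupP]
  apply sup_le
  · rw [commutator_def]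
    rw [Subgroup.commutator_le]
    intro g _ h _
    refine ⟨1, ⟨1, map_one F⟩, ?_⟩
    rw [one_pow]
    have hGh : F h ∈ Subgroup.center G := (hu h).1
    have hcomm : F g * F h = F h * F g := (Subgroup.mem_center_iff.mp hGh (F g))
    rw [commutatorElement_def, map_mul, map_mul, map_mul, map_inv, map_inv, hcomm]
    group
  · rw [Subgroup.closure_le]
    rintro x ⟨g, rfl⟩
    exact ⟨F g, ⟨g, rfl⟩, by rw [map_pow]⟩

lemma autf_deep (u : G ≃* G) (hu : ∀ x : G, x⁻¹ * u x ∈ Subgroup.center G ⊓ groupP p G)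
    (i : ℕ) (x : G) :
    ∃ a, (∃ w, autf u (fun x => (hu x).1) w = a) ∧
      (autf u (fun x => (hu x).1))^[i + 2] x = a ^ ((if p = 2 then 4 else p) ^ (i + 1)) := by
  set F := autf u (fun x => (hu x).1) with hF
  set m := (if p = 2 then 4 else p) with hm
  induction i with
  | zero =>
    have h2 : F^[2] x = F (F x) := by
      rw [show (2 : ℕ) = 1 + 1 from rfl, Function.iterate_succ_apply', Function.iterate_one]
    have hgp : F x ∈ groupP p G := (hu x).2
    obtain ⟨a, hw, ha⟩ := autf_P u hu hgp
    exact ⟨a, hw, by rw [h2, ha, pow_one]⟩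
  | succ i ih =>
    obtain ⟨a, ⟨w, hw⟩, ha⟩ := ih
    have h3 : F^[i + 3] x = F (F^[i + 2] x) := Function.iterate_succ_apply' F (i + 2) x
    have hgp : a ∈ groupP p G := by rw [← hw]; exact (hu w).2
    obtain ⟨b, hwb, hb⟩ := autf_P u hu hgp
    refine ⟨b, hwb, ?_⟩
    rw [h3, ha, map_pow, hb, ← hm, ← pow_mul, ← pow_succ']

end Deep

lemma vlt_aux {p v i : ℕ} (hp : p.Prime) (hv : p ^ v ∣ i + 1) (hi : 1 ≤ i) :
    v + 1 ≤ (if p = 2 then 2 else 1) * i := by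
  have hle : p ^ v ≤ i + 1 := Nat.le_of_dvd (by omega) hv
  by_cases hp2 : p = 2
  · subst hp2
    have h2 : i + 1 ≤ 2 ^ i := Nat.succ_le_of_lt (Nat.lt_two_pow_self (n := i))
    have hvi : v ≤ i := by
      by_contra hvi
      push_neg at hvi
      have h5 : 2 ^ (i + 1) ≤ 2 ^ v := Nat.pow_le_pow_right (by norm_num) hvi
      have h4 : 2 ^ i < 2 ^ (i + 1) := Nat.pow_lt_pow_right (by norm_num) (by omega)
      omega
    rw [if_pos rfl]
    omega
  · have hp3 : 3 ≤ p := by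
      have := hp.two_le
      rcases Nat.lt_or_ge p 3 with h | h
      · interval_cases p <;> simp_all
      · exact h
    rw [if_neg hp2, one_mul]
    rcases Nat.eq_zero_or_pos v with hv0 | hv1
    · omega
    · have h1 : 2 ^ v < 3 ^ v := Nat.pow_lt_pow_left (by norm_num) (by omega)
      have h2 : 3 ^ v ≤ p ^ v := Nat.pow_le_pow_left hp3 v
      have h3 : v < 2 ^ v := Nat.lt_two_pow_self (n := v)
      omega

lemma nat_dvd_aux {p : ℕ} (hp : p.Prime) (n i : ℕ) (hi : 1 ≤ i) :
    p ^ (n + 1) ∣ (if p = 2 then 4 else p) ^ i * (p ^ n).choose (i + 1) := by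
  set v := (i + 1).factorization p with hvdef
  have hv : p ^ v ∣ i + 1 := Nat.ordProj_dvd _ _
  have hvlt : v + 1 ≤ (if p = 2 then 2 else 1) * i := vlt_aux hp hv hi
  have hppos : 1 ≤ p ^ n := Nat.one_le_pow _ _ hp.pos
  have hkey : p ^ n * (p ^ n - 1).choose i = (p ^ n).choose (i + 1) * (i + 1) := by
    have := Nat.add_one_mul_choose_eq (p ^ n - 1) i
    have hs : p ^ n - 1 + 1 = p ^ n := by omega
    rw [hs] at this
    exact this
  have hdvd : p ^ n ∣ (p ^ n).choose (i + 1) * (i + 1) := ⟨_, hkey.symm⟩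
  have hw : ¬ p ∣ (i + 1) / p ^ v := Nat.not_dvd_ordCompl hp (by omega)
  have hcop : Nat.Coprime (p ^ n) ((i + 1) / p ^ v) :=
    Nat.Coprime.pow_left n (hp.coprime_iff_not_dvd.mpr hw)
  have hfac : i + 1 = p ^ v * ((i + 1) / p ^ v) := (Nat.mul_div_cancel' hv).symm
  have hdvd2 : p ^ n ∣ (p ^ n).choose (i + 1) * p ^ v := by
    apply hcop.dvd_of_dvd_mul_right
    have heq : (p ^ n).choose (i + 1) * p ^ v * ((i + 1) / p ^ v)
        = (p ^ n).choose (i + 1) * (i + 1) := by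
      rw [mul_assoc, ← hfac]
    rw [heq]
    exact hdvd
  have hm : (if p = 2 then 4 else p) ^ i = p ^ ((if p = 2 then 2 else 1) * i) := by
    by_cases hp2 : p = 2
    · subst hp2; simp [pow_mul]
    · simp [hp2]
  rw [hm]
  have hfin : p ^ (n + 1) ∣ (p ^ n).choose (i + 1) * p ^ (v + 1) := by
    rw [pow_succ, pow_succ, ← mul_assoc]
    exact mul_dvd_mul_right hdvd2 p
  refine hfin.trans ⟨p ^ ((if p = 2 then 2 else 1) * i - (v + 1)), ?_⟩
  have hsplit : p ^ ((if p = 2 then 2 else 1) * i) = p ^ (v + 1) * p ^ ((if p = 2 then 2 else 1) * i - (v + 1)) := by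
    rw [← pow_add]
    congr 1
    omega
  rw [hsplit]
  ring

section Directions
variable {G : Type*} [Group G] {p : ℕ}

lemma pow_eq_one_of_forall (hp : p.Prime) (u : G ≃* G)
    (hu : ∀ x : G, x⁻¹ * u x ∈ Subgroup.center G ⊓ groupP p G) (n : ℕ)
    (h1 : ∀ x : G, (x⁻¹ * u x) ^ p ^ n = 1) : u ^ p ^ n = 1 := by
  have hc : ∀ x : G, x⁻¹ * u x ∈ Subgroup.center G := fun x => (hu x).1
  set F := autf u hc with hF
  have hFone : ∀ w, (F w) ^ p ^ n = 1 := fun w => h1 w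
  apply DFunLike.ext
  intro x
  have hform := pow_apply_formula u hc (p ^ n) x
  rw [hform]
  have hprod : (∏ i ∈ Finset.range (p ^ n), (autS u hc x i) ^ ((p ^ n).choose (i + 1))) = 1 := by
    apply Finset.prod_eq_one
    intro i _
    cases i with
    | zero =>
      apply Subtype.ext
      push_cast
      rw [Nat.choose_one_right]
      exact hFone x
    | succ j =>
      obtain ⟨a, ⟨w, hw⟩, ha⟩ := autf_deep u hu j x
      apply Subtype.ext
      push_cast
      have hcoe : ((autS u hc x (j + 1) : ↥(Subgroup.center G)) : G) = F^[j + 2] x := rfl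
      rw [hcoe, ha, ← pow_mul]
      have hdvd : p ^ n ∣ (if p = 2 then 4 else p) ^ (j + 1) * (p ^ n).choose (j + 1 + 1) :=
        dvd_trans (pow_dvd_pow p (Nat.le_succ n)) (nat_dvd_aux hp n (j + 1) (by omega))
      obtain ⟨c, hcc⟩ := hdvd
      rw [hcc, pow_mul, ← hw, hFone w, one_pow]
  rw [hprod]
  simp

lemma forall_of_pow_eq_one [Finite G] (hp : p.Prime) (hG : IsPGroup p G) (u : G ≃* G)
    (hu : ∀ x : G, x⁻¹ * u x ∈ Subgroup.center G ⊓ groupP p G) (n : ℕ)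
    (h1 : u ^ p ^ n = 1) : ∀ x : G, (x⁻¹ * u x) ^ p ^ n = 1 := by
  have hc : ∀ x : G, x⁻¹ * u x ∈ Subgroup.center G := fun x => (hu x).1
  set F := autf u hc with hF
  -- uniform exponent
  have : Fintype G := Fintype.ofFinite G
  haveI : Fact p.Prime := ⟨hp⟩
  obtain ⟨N, hN⟩ := IsPGroup.iff_card.mp hG
  have hexp : ∀ g : G, g ^ p ^ N = 1 := by
    intro g
    rw [← hN, Nat.card_eq_fintype_card]
    exact pow_card_eq_one
  set D : ℕ → Subgroup G :=
    fun j => Subgroup.closure ((fun t => t ^ p ^ (n + j)) '' Set.range F) with hD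
  -- step (a)
  have keyA : ∀ x : G, (F x) ^ p ^ n ∈ D 1 := by
    intro x
    have hx : (u ^ p ^ n) x = x := by rw [h1]; rfl
    have hform := pow_apply_formula u hc (p ^ n) x
    rw [hx] at hform
    have hprod : (∏ i ∈ Finset.range (p ^ n), (autS u hc x i) ^ ((p ^ n).choose (i + 1))) = 1 := by
      have h := left_eq_mul.mp hform
      exact_mod_cast h
    have hppos : 1 ≤ p ^ n := Nat.one_le_pow _ _ hp.pos
    set k := p ^ n - 1 with hk
    have hks : k + 1 = p ^ n := by omega
    rw [← hks, Finset.prod_range_succ'] at hprod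
    have hmem : (∏ i ∈ Finset.range k,
        (autS u hc x (i + 1)) ^ ((k + 1).choose (i + 1 + 1)))
          ∈ (D 1).comap (Subgroup.center G).subtype := by
      apply Subgroup.prod_mem
      intro i _
      rw [Subgroup.mem_comap]
      obtain ⟨a, ⟨w, hw⟩, ha⟩ := autf_deep u hu i x
      have hcoe : (Subgroup.center G).subtype ((autS u hc x (i + 1)) ^ ((k + 1).choose (i + 1 + 1)))
          = (F^[i + 2] x) ^ ((k + 1).choose (i + 1 + 1)) := by
        rw [map_pow]; rfl
      rw [hcoe, ha, ← pow_mul, hks]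
      obtain ⟨c, hcc⟩ := nat_dvd_aux hp n (i + 1) (by omega)
      rw [hcc, pow_mul]
      apply Subgroup.pow_mem
      exact Subgroup.subset_closure (Set.mem_image_of_mem _ ⟨w, hw⟩)
    have hmem' : ((∏ i ∈ Finset.range k,
        (autS u hc x (i + 1)) ^ ((k + 1).choose (i + 1 + 1)) : ↥(Subgroup.center G)) : G) ∈ D 1 :=
      Subgroup.mem_comap.mp hmem
    have hinv : autS u hc x 0 ^ ((k + 1).choose (0 + 1))
        = (∏ i ∈ Finset.range k, (autS u hc x (i + 1)) ^ ((k + 1).choose (i + 1 + 1)))⁻¹ := by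
      rw [eq_inv_iff_mul_eq_one, mul_comm]
      exact hprod
    have hfinal := congrArg (fun z : ↥(Subgroup.center G) => (z : G)) hinv
    push_cast at hfinal
    have hcoe0 : ((autS u hc x 0 : ↥(Subgroup.center G)) : G) = F x := rfl
    rw [hcoe0, Nat.choose_one_right, hks] at hfinal
    rw [hks] at hmem'
    rw [hfinal]
    exact Subgroup.inv_mem _ hmem'
  -- step (b)
  have keyB : ∀ j : ℕ, ∀ a ∈ Set.range F, a ^ p ^ n ∈ D j := by
    intro j
    induction j with
    | zero =>
      intro a ha
      exact Subgroup.subset_closure (Set.mem_image_of_mem _ ha)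
    | succ j ih =>
      intro a ha
      have h1' : a ^ p ^ n ∈ D 1 := by
        obtain ⟨w, rfl⟩ := ha
        exact keyA w
      -- D 1 ≤ D (j+1)
      refine (?_ : D 1 ≤ D (j + 1)) h1'
      rw [hD, Subgroup.closure_le]
      rintro t ⟨b, hb, rfl⟩
      have hbD : b ^ p ^ n ∈ D j := ih b hb
      have hstep : ∀ y, ∀ hy : y ∈ D j, y ∈ Subgroup.center G ∧ y ^ p ∈ D (j + 1) := by
        intro y hy
        induction hy using Subgroup.closure_induction with
        | mem t ht =>
          obtain ⟨c, hcr, rfl⟩ := ht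
          have hcc : c ∈ Subgroup.center G := by
            obtain ⟨w, rfl⟩ := hcr
            exact hc w
          constructor
          · exact Subgroup.pow_mem _ hcc _
          · rw [← pow_mul, ← pow_succ]
            exact Subgroup.subset_closure (Set.mem_image_of_mem _ hcr)
        | one =>
          exact ⟨Subgroup.one_mem _, by rw [one_pow]; exact Subgroup.one_mem _⟩
        | mul y z hy hz ihy ihz =>
          refine ⟨Subgroup.mul_mem _ ihy.1 ihz.1, ?_⟩
          have hcomm : Commute y z := Subgroup.mem_center_iff.mp ihz.1 y
          rw [hcomm.mul_pow]
          exact Subgroup.mul_mem _ ihy.2 ihz.2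
        | inv y hy ihy =>
          exact ⟨Subgroup.inv_mem _ ihy.1, by rw [inv_pow]; exact Subgroup.inv_mem _ ihy.2⟩
      have := (hstep _ hbD).2
      rw [← pow_mul, ← pow_succ] at this
      exact this
  -- step (c)
  intro x
  have hbot : D N ≤ ⊥ := by
    rw [hD, Subgroup.closure_le]
    rintro t ⟨b, hb, rfl⟩
    simp only [SetLike.mem_coe, Subgroup.mem_bot]
    show b ^ p ^ (n + N) = 1
    rw [pow_add, pow_mul]
    exact hexp _
  have := keyB N (F x) ⟨x, rfl⟩
  have h0 := hbot this
  rw [Subgroup.mem_bot] at h0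
  exact h0

end Directions

/-- **Proposition 3.1(b).** Let `G` be a finite `p`-group and `S = Z(G) ∩ P(G)`. For every
`n ≥ 1`, the subgroup `Ω_n(Aut_S(G))` generated by the elements of order dividing `p ^ n`
coincides with the set of such elements, and both coincide with `Aut_{Ω_n(S)}(G)` where
`Ω_n(S) = {z ∈ S | z ^ p ^ n = 1}`. -/
theorem autSub_omega_eq (p : ℕ) (hp : p.Prime) (G : Type*) [Group G] [Finite G]
    (hG : IsPGroup p G) (n : ℕ) (hn : 1 ≤ n) :
    (∀ u : ↥(autSub (Subgroup.center G ⊓ groupP p G)),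
      u ∈ Subgroup.closure {v : ↥(autSub (Subgroup.center G ⊓ groupP p G)) | v ^ p ^ n = 1} ↔
        u ^ p ^ n = 1) ∧
    (∀ u : G ≃* G,
      (u ∈ autSub (Subgroup.center G ⊓ groupP p G) ∧ u ^ p ^ n = 1) ↔
      (∀ x : G, x⁻¹ * u x ∈ Subgroup.center G ⊓ groupP p G ∧ (x⁻¹ * u x) ^ p ^ n = 1)) := by
  set S := Subgroup.center G ⊓ groupP p G with hS
  have hmem_iff : ∀ u : G ≃* G, u ∈ autSub S ↔ ∀ x : G, x⁻¹ * u x ∈ S := fun u => Iff.rfl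
  -- characterization of elements of order dividing p^n in autSub S
  have char : ∀ v : ↥(autSub S),
      (v ^ p ^ n = 1 ↔ ∀ x : G, (x⁻¹ * (v : G ≃* G) x) ^ p ^ n = 1) := by
    intro v
    have hv : ∀ x : G, x⁻¹ * (v : G ≃* G) x ∈ S := (hmem_iff _).mp v.2
    constructor
    · intro h
      have hcoe : ((v : G ≃* G)) ^ p ^ n = 1 := by
        have := congrArg (fun w : ↥(autSub S) => (w : G ≃* G)) h
        push_cast at this
        exact this
      exact forall_of_pow_eq_one hp hG _ hv n hcoe
    · intro h
      have hcoe := pow_eq_one_of_forall hp _ hv n h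
      apply Subtype.ext
      push_cast
      exact hcoe
  constructor
  · -- first conjunct
    set V : Subgroup ↥(autSub S) :=
      { carrier := {v : ↥(autSub S) | v ^ p ^ n = 1}
        one_mem' := one_pow _
        mul_mem' := by
          intro v w hv hw
          simp only [Set.mem_setOf_eq] at hv hw ⊢
          rw [char] at hv hw ⊢
          intro x
          set a := x⁻¹ * (v : G ≃* G) x with ha
          set t := x⁻¹ * (w : G ≃* G) x with ht
          set s := t⁻¹ * (v : G ≃* G) t with hs
          have hac : a ∈ Subgroup.center G := ((((hmem_iff _).mp v.2) x)).1
          have htc : t ∈ Subgroup.center G := ((((hmem_iff _).mp w.2) x)).1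
          have hrewrite : x⁻¹ * ((v * w : ↥(autSub S)) : G ≃* G) x = a * (t * s) := by
            have hcm : ((v * w : ↥(autSub S)) : G ≃* G) x = (v : G ≃* G) ((w : G ≃* G) x) := rfl
            have h1 : (w : G ≃* G) x = x * t := by rw [ht]; group
            have h2 : (v : G ≃* G) t = t * s := by rw [hs]; group
            have h3 : (v : G ≃* G) x = x * a := by rw [ha]; group
            rw [hcm, h1, map_mul, h2, h3]
            group
          rw [hrewrite]
          have hc1 : Commute a (t * s) := (Subgroup.mem_center_iff.mp hac (t * s)).symm
          have hc2 : Commute t s := (Subgroup.mem_center_iff.mp htc s).symm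
          rw [hc1.mul_pow, hc2.mul_pow, hv x, hw x, hv t, one_mul, mul_one]
        inv_mem' := by
          intro v hv
          simp only [Set.mem_setOf_eq] at hv ⊢
          rw [char] at hv ⊢
          intro x
          set y := ((v⁻¹ : ↥(autSub S)) : G ≃* G) x with hy
          have hvy : (v : G ≃* G) y = x := by
            have hcoe : ((v⁻¹ : ↥(autSub S)) : G ≃* G) = ((v : G ≃* G))⁻¹ := rfl
            rw [hy, hcoe]
            exact MulAut.apply_inv_self G (v : G ≃* G) x
          have hrw : x⁻¹ * ((v⁻¹ : ↥(autSub S)) : G ≃* G) x = (y⁻¹ * (v : G ≃* G) y)⁻¹ := by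
            rw [← hy, hvy]
            group
          rw [hrw, inv_pow, hv y, inv_one] } with hV
    intro u
    constructor
    · intro h
      exact (Subgroup.closure_le V).mpr (fun v hv => hv) h
    · intro h
      exact Subgroup.subset_closure h
  · -- second conjunct
    intro u
    constructor
    · rintro ⟨hmem, hpow⟩ x
      have hu := (hmem_iff u).mp hmem
      exact ⟨hu x, forall_of_pow_eq_one hp hG u hu n hpow x⟩
    · intro h
      have hu : ∀ x : G, x⁻¹ * u x ∈ S := fun x => (h x).1
      exact ⟨(hmem_iff u).mpr hu, pow_eq_one_of_forall hp u hu n (fun x => (h x).2)⟩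
end

section
/- Let p be a prime, G a finite p-group, and S = Z(G) ∩ P(G). Then the group Aut_S(G) is nilpotent of class at most min{r,s}, where exp(G/[G,G]) = p^r and exp(Z(G)) = p^s. -/
open scoped commutatorElement

namespace AutSubNilpotentProof

variable {G : Type*} [Group G]


variable {G : Type*} [Group G]

def Mgp (p k : ℕ) (S : Subgroup G) (i : ℕ) : Subgroup G :=
  Subgroup.closure {x : G | ∃ z ∈ S, z ^ p ^ k = 1 ∧ z ^ p ^ i = x}

theorem Mgp_le (p k : ℕ) (S : Subgroup G) (i : ℕ) : Mgp p k S i ≤ S := by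
  refine Subgroup.closure_le _ |>.mpr ?_
  rintro x ⟨z, hz, -, rfl⟩
  exact S.pow_mem hz _

theorem Mgp_succ_le (p k : ℕ) (S : Subgroup G) (i : ℕ) :
    Mgp p k S (i + 1) ≤ Mgp p k S i := by
  refine Subgroup.closure_le _ |>.mpr ?_
  rintro x ⟨z, hz, hzk, rfl⟩
  refine Subgroup.subset_closure ⟨z ^ p, S.pow_mem hz _, ?_, ?_⟩
  · rw [← pow_mul, mul_comm, pow_mul, hzk, one_pow]
  · rw [← pow_mul, ← pow_succ']

theorem Mgp_le_of_le (p k : ℕ) (S : Subgroup G) {i j : ℕ} (h : i ≤ j) :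
    Mgp p k S j ≤ Mgp p k S i := by
  induction j with
  | zero => simp [Nat.le_zero.mp h]
  | succ n ih =>
    rcases Nat.lt_or_ge i (n+1) with hlt | hge
    · exact (Mgp_succ_le p k S n).trans (ih (Nat.lt_succ_iff.mp hlt))
    · have : i = n + 1 := le_antisymm h hge
      subst this; exact le_rfl

theorem pow_mem_Mgp (p k : ℕ) (S : Subgroup G) (hSc : S ≤ Subgroup.center G)
    {i : ℕ} {y : G} (hy : y ∈ Mgp p k S i) (t : ℕ) :
    y ^ p ^ t ∈ Mgp p k S (i + t) := by
  induction hy using Subgroup.closure_induction with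
  | mem x hx =>
    obtain ⟨z, hz, hzk, rfl⟩ := hx
    refine Subgroup.subset_closure ⟨z, hz, hzk, ?_⟩
    rw [← pow_mul, pow_add]
  | one => simpa using Subgroup.one_mem _
  | mul a b ha hb pa pb =>
    have hcomm : Commute a b := by
      have := Subgroup.mem_center_iff.mp (hSc (Mgp_le p k S i ha))
      exact (this b).symm
    rw [hcomm.mul_pow]
    exact Subgroup.mul_mem _ pa pb
  | inv a ha pa =>
    rw [inv_pow]
    exact Subgroup.inv_mem _ pa

theorem Mgp_k_eq_bot (p k : ℕ) (S : Subgroup G) : Mgp p k S k = ⊥ := by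
  refine le_antisymm ?_ bot_le
  refine Subgroup.closure_le _ |>.mpr ?_
  rintro x ⟨z, hz, hzk, rfl⟩
  simp [hzk]

variable (S : Subgroup G) (hSc : S ≤ Subgroup.center G)

/-- The map `x ↦ x⁻¹ * u x` as a monoid hom, for a central automorphism. -/
def Fhom (u : G ≃* G) (hu : ∀ x : G, x⁻¹ * u x ∈ S) : G →* G where
  toFun x := x⁻¹ * u x
  map_one' := by simp
  map_mul' x y := by
    have h := Subgroup.mem_center_iff.mp (hSc (hu x))
    calc (x * y)⁻¹ * u (x * y) = y⁻¹ * (x⁻¹ * u x) * u y := by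
          rw [map_mul]; group
    _ = (x⁻¹ * u x) * y⁻¹ * u y := by rw [h y⁻¹]
    _ = (x⁻¹ * u x) * (y⁻¹ * u y) := by group

@[simp] theorem Fhom_apply (u : G ≃* G) (hu : ∀ x : G, x⁻¹ * u x ∈ S) (x : G) :
    Fhom S hSc u hu x = x⁻¹ * u x := rfl

theorem Fhom_commutator (u : G ≃* G) (hu : ∀ x : G, x⁻¹ * u x ∈ S)
    {x : G} (hx : x ∈ commutator G) : Fhom S hSc u hu x = 1 := by
  rw [commutator_eq_closure] at hx
  induction hx using Subgroup.closure_induction with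
  | mem a ha =>
    obtain ⟨g, h, rfl⟩ := ha
    rw [map_commutatorElement]
    refine commutatorElement_eq_one_iff_commute.mpr ?_
    exact ((Subgroup.mem_center_iff.mp (hSc (hu g))) (Fhom S hSc u hu h)).symm
  | one => simp
  | mul a b _ _ pa pb => rw [map_mul, pa, pb, one_mul]
  | inv a _ pa => rw [map_inv, pa, inv_one]

theorem Fhom_mem_P (p k : ℕ) (u : G ≃* G) (hu : ∀ x : G, x⁻¹ * u x ∈ S)
    {i : ℕ} (hi : ∀ x : G, Fhom S hSc u hu x ∈ Mgp p k S i)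
    {z : G} (hz : z ∈ groupP p G) : Fhom S hSc u hu z ∈ Mgp p k S (i + 1) := by
  suffices h : groupP p G ≤ Subgroup.comap (Fhom S hSc u hu) (Mgp p k S (i + 1)) from h hz
  refine sup_le ?_ ?_
  · intro x hx
    rw [Subgroup.mem_comap, Fhom_commutator S hSc u hu hx]
    exact Subgroup.one_mem _
  · refine Subgroup.closure_le _ |>.mpr ?_
    rintro x ⟨g, rfl⟩
    show Fhom S hSc u hu (g ^ (if p = 2 then 4 else p)) ∈ Mgp p k S (i + 1)
    rw [map_pow]
    by_cases hp2 : p = 2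
    · subst hp2
      simp only [if_pos rfl]
      have h4 : (4 : ℕ) = 2 ^ 2 := by norm_num
      rw [h4]
      exact Mgp_le_of_le 2 k S (by omega) (pow_mem_Mgp 2 k S hSc (hi g) 2)
    · simp only [if_neg hp2]
      have := pow_mem_Mgp p k S hSc (hi g) 1
      rwa [pow_one] at this

theorem Fhom_mem_M (p k : ℕ) (hSP : S ≤ groupP p G) (v : G ≃* G)
    (hv : ∀ x : G, x⁻¹ * v x ∈ S)
    (h0 : ∀ x : G, Fhom S hSc v hv x ∈ Mgp p k S 0)
    {i : ℕ} {w : G} (hw : w ∈ Mgp p k S i) :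
    Fhom S hSc v hv w ∈ Mgp p k S (i + 1) := by
  induction hw using Subgroup.closure_induction with
  | mem x hx =>
    obtain ⟨z, hz, hzk, rfl⟩ := hx
    rw [map_pow]
    have h1 : Fhom S hSc v hv z ∈ Mgp p k S (0 + 1) :=
      Fhom_mem_P S hSc p k v hv h0 (hSP hz)
    have := pow_mem_Mgp p k S hSc h1 i
    rwa [Nat.zero_add, Nat.add_comm 1 i] at this
  | one => rw [map_one]; exact Subgroup.one_mem _
  | mul a b _ _ pa pb => rw [map_mul]; exact Subgroup.mul_mem _ pa pb
  | inv a _ pa => rw [map_inv]; exact Subgroup.inv_mem _ pa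

/-- The key commutator identity. -/
theorem key_identity (hSc' : S ≤ Subgroup.center G) (u v : G ≃* G) (hu : ∀ x : G, x⁻¹ * u x ∈ S)
    (hv : ∀ x : G, x⁻¹ * v x ∈ S) (x : G) :
    ((v * u) x)⁻¹ * ⁅u, v⁆ ((v * u) x) =
      ((x⁻¹ * u x)⁻¹ * v (x⁻¹ * u x))⁻¹ * ((x⁻¹ * v x)⁻¹ * u (x⁻¹ * v x)) := by
  have hc : ⁅u, v⁆ * (v * u) = u * v := by group
  have h1 : ⁅u, v⁆ ((v * u) x) = u (v x) := by
    rw [← MulAut.mul_apply, hc, MulAut.mul_apply]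
  rw [h1, MulAut.mul_apply]
  have hct := Subgroup.mem_center_iff.mp (hSc' (hu x))
  set t := x⁻¹ * u x with htdef
  set s := x⁻¹ * v x with hsdef
  have hux : u x = x * t := by rw [htdef]; group
  have hvx : v x = x * s := by rw [hsdef]; group
  have hvu : v (u x) = x * s * v t := by rw [hux, map_mul, hvx]
  have huv : u (v x) = x * t * u s := by rw [hvx, map_mul, hux]
  rw [hvu, huv]
  calc (x * s * v t)⁻¹ * (x * t * u s)
      = (v t)⁻¹ * (s⁻¹ * t) * u s := by group
    _ = (v t)⁻¹ * (t * s⁻¹) * u s := by rw [hct s⁻¹]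
    _ = (t⁻¹ * v t)⁻¹ * (s⁻¹ * u s) := by group


/-- The level-`i` subgroup of `autSub S`. -/
def Bsub (p k : ℕ) (S : Subgroup G) (i : ℕ) : Subgroup ↥(autSub S) where
  carrier := {u | ∀ x : G, x⁻¹ * (u : G ≃* G) x ∈ Mgp p k S i}
  one_mem' := by
    intro x
    simpa using Subgroup.one_mem _
  mul_mem' := by
    intro u v hu hv x
    have h : x⁻¹ * ((u * v : ↥(autSub S)) : G ≃* G) x =
        (x⁻¹ * (v : G ≃* G) x) * (((v : G ≃* G) x)⁻¹ * (u : G ≃* G) ((v : G ≃* G) x)) := by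
      simp [MulAut.mul_apply, mul_assoc]
    rw [h]
    exact Subgroup.mul_mem _ (hv x) (hu _)
  inv_mem' := by
    intro u hu x
    have h : x⁻¹ * ((u⁻¹ : ↥(autSub S)) : G ≃* G) x =
        ((((u⁻¹ : ↥(autSub S)) : G ≃* G) x)⁻¹ *
          (u : G ≃* G) (((u⁻¹ : ↥(autSub S)) : G ≃* G) x))⁻¹ := by
      have : (u : G ≃* G) (((u⁻¹ : ↥(autSub S)) : G ≃* G) x) = x := by
        simp [MulAut.inv_def]
      rw [this, mul_inv_rev, inv_inv]
    rw [h]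
    exact Subgroup.inv_mem _ (hu _)

end AutSubNilpotentProof

/-- **Proposition 3.1(d).** Let `G` be a finite `p`-group and `S = Z(G) ∩ P(G)`. Then `Aut_S(G)`
is nilpotent of class at most `min r s`, where `exp(G/[G,G]) = p ^ r` and `exp(Z(G)) = p ^ s`. -/
theorem autSub_nilpotent (p r s : ℕ) (hp : p.Prime) (G : Type*) [Group G] [Finite G]
    (hG : IsPGroup p G)
    (hr : Monoid.exponent (G ⧸ commutator G) = p ^ r)
    (hs : Monoid.exponent ↥(Subgroup.center G) = p ^ s) :
    (⊤ : Subgroup ↥(autSub (Subgroup.center G ⊓ groupP p G))).lowerCentralSeries (min r s) = ⊥ := by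
  classical
  set S : Subgroup G := Subgroup.center G ⊓ groupP p G with hSdef
  have hSc : S ≤ Subgroup.center G := inf_le_left
  have hSP : S ≤ groupP p G := inf_le_right
  set k := min r s with hk
  have hmem : ∀ u : ↥(autSub S), ∀ x : G, x⁻¹ * (u : G ≃* G) x ∈ S := fun u x => u.2 x
  -- every value of `Fhom` has order dividing `p ^ k`
  have hord : ∀ (u : ↥(autSub S)) (x : G), (x⁻¹ * (u : G ≃* G) x) ^ p ^ k = 1 := by
    intro u x
    have h1 : (x⁻¹ * (u : G ≃* G) x) ^ p ^ r = 1 := by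
      have hcx : x ^ p ^ r ∈ commutator G := by
        have h := Monoid.pow_exponent_eq_one (QuotientGroup.mk x : G ⧸ commutator G)
        rw [hr] at h
        rwa [← QuotientGroup.mk_pow, QuotientGroup.eq_one_iff] at h
      have h := AutSubNilpotentProof.Fhom_commutator S hSc (u : G ≃* G) (hmem u) hcx
      rwa [map_pow, AutSubNilpotentProof.Fhom_apply] at h
    have h2 : (x⁻¹ * (u : G ≃* G) x) ^ p ^ s = 1 := by
      have hz : x⁻¹ * (u : G ≃* G) x ∈ Subgroup.center G := hSc (hmem u x)
      have h := Monoid.pow_exponent_eq_one (⟨_, hz⟩ : Subgroup.center G)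
      rw [hs] at h
      have := congrArg (Subtype.val) h
      simpa using this
    obtain ⟨t, htr, hteq⟩ := (Nat.dvd_prime_pow hp).mp (orderOf_dvd_of_pow_eq_one h1)
    have hts : t ≤ s := by
      have : p ^ t ∣ p ^ s := hteq ▸ orderOf_dvd_of_pow_eq_one h2
      exact (Nat.pow_dvd_pow_iff_le_right hp.one_lt).mp this
    have : orderOf (x⁻¹ * (u : G ≃* G) x) ∣ p ^ k :=
      hteq ▸ pow_dvd_pow p (le_min htr hts)
    exact orderOf_dvd_iff_pow_eq_one.mp this
  have hM0 : ∀ (u : ↥(autSub S)) (x : G),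
      x⁻¹ * (u : G ≃* G) x ∈ AutSubNilpotentProof.Mgp p k S 0 := fun u x =>
    Subgroup.subset_closure ⟨_, hmem u x, hord u x, by simp⟩
  -- main induction
  have main : ∀ n : ℕ, (⊤ : Subgroup ↥(autSub S)).lowerCentralSeries n ≤ AutSubNilpotentProof.Bsub p k S n := by
    intro n
    induction n with
    | zero => exact fun u _ => fun x => hM0 u x
    | succ n ih =>
      rw [lowerCentralSeries_succ]
      refine Subgroup.commutator_le.mpr ?_
      intro g hg h _
      intro y
      -- y⁻¹ * ⁅g,h⁆ y ∈ Mgp (n+1)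
      set u : G ≃* G := (g : G ≃* G) with hudef
      set v : G ≃* G := (h : G ≃* G) with hvdef
      have hgi : ∀ x : G, x⁻¹ * u x ∈ AutSubNilpotentProof.Mgp p k S n := ih hg
      have hcoe : ((⁅g, h⁆ : ↥(autSub S)) : G ≃* G) = ⁅u, v⁆ := by
        simp [commutatorElement_def, hudef, hvdef]
      set x : G := (v * u)⁻¹ y with hxdef
      have hyx : (v * u) x = y := by
        rw [hxdef]
        simp [MulAut.inv_def]
      have hkey := AutSubNilpotentProof.key_identity S hSc u v (hmem g) (hmem h) x
      rw [hyx] at hkey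
      rw [hcoe, hkey]
      have m1 : ((x⁻¹ * u x)⁻¹ * v (x⁻¹ * u x)) ∈ AutSubNilpotentProof.Mgp p k S (n + 1) := by
        have := AutSubNilpotentProof.Fhom_mem_M S hSc p k hSP v (hmem h)
          (fun z => hM0 h z) (hgi x)
        simpa using this
      have m2 : ((x⁻¹ * v x)⁻¹ * u (x⁻¹ * v x)) ∈ AutSubNilpotentProof.Mgp p k S (n + 1) := by
        have := AutSubNilpotentProof.Fhom_mem_P S hSc p k u (hmem g)
          (fun z => hgi z) (hSP (hmem h x))
        simpa using this
      exact Subgroup.mul_mem _ (Subgroup.inv_mem _ m1) m2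
  refine le_antisymm (fun u hu => ?_) bot_le
  have h1 := main k hu
  have hu1 : (u : G ≃* G) = 1 := by
    ext z
    have hz := h1 z
    rw [AutSubNilpotentProof.Mgp_k_eq_bot, Subgroup.mem_bot] at hz
    have := inv_mul_eq_one.mp hz
    simp [← this]
  exact Subgroup.mem_bot.mpr (Subtype.ext hu1)
end

section
/- Let p be a prime and G a finite p-group such that Z(G) ≤ Φ(G), the Frattini subgroup of G. Then Aut_{Z(G)}(G) is nilpotent of class at most min{r,s}, where exp(G/[G,G]) = p^r and exp(Z(G)) = p^s. -/
section Aux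

variable {p : ℕ}

/-- In a commutative group of exponent dividing a prime `p`, every nontrivial element avoids
some maximal subgroup. -/
lemma exists_coatom_not_mem {Q : Type*} [CommGroup Q] (hp : p.Prime)
    (hexp : ∀ y : Q, y ^ p = 1) {x : Q} (hx : x ≠ 1) :
    ∃ M : Subgroup Q, IsCoatom M ∧ x ∉ M := by
  haveI : Fact p.Prime := ⟨hp⟩
  haveI : Module (ZMod p) (Additive Q) := AddCommGroup.zmodModule (by
    intro y
    show p • y = 0
    have : Additive.toMul y ^ p = 1 := hexp _
    exact congrArg Additive.ofMul this)
  set x' : Additive Q := Additive.ofMul x with hx'def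
  have hx' : x' ≠ 0 := hx
  set N : Submodule (ZMod p) (Additive Q) := Submodule.span (ZMod p) {x'} with hN
  obtain ⟨K, hK⟩ := N.exists_isCompl
  have hxN : x' ∈ N := by
    rw [hN]
    exact Submodule.subset_span (Set.mem_singleton x')
  have hxK : x' ∉ K := by
    intro h
    have : x' ∈ N ⊓ K := ⟨hxN, h⟩
    rw [hK.inf_eq_bot] at this
    exact hx' this
  have hcoatom : IsCoatom K := by
    constructor
    · intro h
      exact hxK (h ▸ Submodule.mem_top)
    · intro W hKW
      have hsup : K ⊔ N = ⊤ := by rw [sup_comm]; exact hK.sup_eq_top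
      have hmod : (K ⊔ N) ⊓ W = K ⊔ (N ⊓ W) := sup_inf_assoc_of_le N hKW.le
      rw [hsup, top_inf_eq] at hmod
      by_cases hNW : N ⊓ W = ⊥
      · rw [hNW, sup_bot_eq] at hmod
        exact absurd hmod.symm hKW.ne
      · obtain ⟨v, hv, hv0⟩ := Submodule.ne_bot_iff _ |>.mp hNW
        obtain ⟨c, hc⟩ := Submodule.mem_span_singleton.mp hv.1
        have hc0 : c ≠ 0 := by
          rintro rfl
          rw [zero_smul] at hc
          exact hv0 hc.symm
        have hxW : x' ∈ W := by
          have : c⁻¹ • v = x' := by rw [← hc, smul_smul, inv_mul_cancel₀ hc0, one_smul]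
          exact this ▸ Submodule.smul_mem W c⁻¹ hv.2
        have hNle : N ≤ W := Submodule.span_le.mpr (by simpa using hxW)
        rw [eq_top_iff, ← hsup]
        exact sup_le hKW.le hNle
  refine ⟨Subgroup.toAddSubgroup.symm ((AddSubgroup.toZModSubmodule p).symm K), ?_, ?_⟩
  · rw [OrderIso.isCoatom_iff, OrderIso.isCoatom_iff]
    exact hcoatom
  · exact hxK

/-- The Frattini subgroup is contained in the kernel of any surjective map onto a commutative
group of exponent dividing a prime `p`. -/
lemma frattini_le_ker {G Q : Type*} [Group G] [CommGroup Q] (hp : p.Prime) (φ : G →* Q)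
    (hsurj : Function.Surjective φ) (hexp : ∀ y : Q, y ^ p = 1) : frattini G ≤ φ.ker := by
  intro g hg
  rw [MonoidHom.mem_ker]
  by_contra h1
  obtain ⟨M, hM, hxM⟩ := exists_coatom_not_mem hp hexp h1
  exact hxM (frattini_le_coatom hM (frattini_le_comap_frattini_of_surjective hsurj hg))

/-- Any homomorphism into a commutative group sends the Frattini subgroup into the subgroup
of `p`-th powers of its range. -/
lemma frattini_map_mem_pow {G H : Type*} [Group G] [CommGroup H] (hp : p.Prime)
    (f : G →* H) {z : G} (hz : z ∈ frattini G) :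
    f z ∈ (f.range).map (powMonoidHom p) := by
  set K : Subgroup H := (f.range).map (powMonoidHom p) with hK
  set q : G →* H ⧸ K := (QuotientGroup.mk' K).comp f with hq
  have hpow : ∀ x : G, q (x ^ p) = 1 := by
    intro x
    show (QuotientGroup.mk' K) (f (x ^ p)) = 1
    rw [QuotientGroup.mk'_apply, QuotientGroup.eq_one_iff, map_pow]
    exact ⟨f x, ⟨x, rfl⟩, rfl⟩
  have hker : frattini G ≤ q.ker := by
    rw [← MonoidHom.ker_rangeRestrict]
    refine frattini_le_ker hp q.rangeRestrict q.rangeRestrict_surjective ?_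
    intro y
    obtain ⟨x, rfl⟩ := q.rangeRestrict_surjective y
    rw [← map_pow]
    have hc : (q.rangeRestrict (x ^ p) : H ⧸ K) = q (x ^ p) := rfl
    exact Subtype.ext (hc.trans (hpow x))
  have := hker hz
  rw [MonoidHom.mem_ker, hq, MonoidHom.comp_apply, QuotientGroup.mk'_apply,
    QuotientGroup.eq_one_iff] at this
  exact this

end Aux

section AutSubF

variable {G : Type*} [Group G]

/-- The homomorphism `G →* Z(G)` attached to a central automorphism. -/
def autSubF (u : ↥(autSub (Subgroup.center G))) : G →* ↥(Subgroup.center G) where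
  toFun x := ⟨x⁻¹ * (u : G ≃* G) x, u.2 x⟩
  map_one' := by
    ext
    simp
  map_mul' x y := by
    ext
    show (x * y)⁻¹ * (u : G ≃* G) (x * y) =
      (x⁻¹ * (u : G ≃* G) x) * (y⁻¹ * (u : G ≃* G) y)
    have hcomm := Subgroup.mem_center_iff.mp (u.2 x) y⁻¹
    rw [map_mul]
    calc (x * y)⁻¹ * ((u : G ≃* G) x * (u : G ≃* G) y)
        = (y⁻¹ * (x⁻¹ * (u : G ≃* G) x)) * (u : G ≃* G) y := by group
      _ = ((x⁻¹ * (u : G ≃* G) x) * y⁻¹) * (u : G ≃* G) y := by rw [hcomm]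
      _ = (x⁻¹ * (u : G ≃* G) x) * (y⁻¹ * (u : G ≃* G) y) := by group

lemma autSubF_apply (u : ↥(autSub (Subgroup.center G))) (x : G) :
    (autSubF u x : G) = x⁻¹ * (u : G ≃* G) x := rfl

lemma autSub_apply_eq (u : ↥(autSub (Subgroup.center G))) (x : G) :
    (u : G ≃* G) x = x * ↑(autSubF u x) := by
  rw [autSubF_apply, mul_inv_cancel_left]

lemma autSubF_mul (u v : ↥(autSub (Subgroup.center G))) (x : G) :
    autSubF (u * v) x = autSubF v x * autSubF u ((v : G ≃* G) x) := by
  ext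
  show x⁻¹ * ((u * v : ↥(autSub (Subgroup.center G))) : G ≃* G) x
      = (x⁻¹ * (v : G ≃* G) x) * (((v : G ≃* G) x)⁻¹ * (u : G ≃* G) ((v : G ≃* G) x))
  rw [MulMemClass.coe_mul, MulAut.mul_apply]
  group

lemma autSubF_inv (u : ↥(autSub (Subgroup.center G))) (x : G) :
    autSubF u⁻¹ x = (autSubF u (((u : G ≃* G))⁻¹ x))⁻¹ := by
  ext
  show x⁻¹ * ((u⁻¹ : ↥(autSub (Subgroup.center G))) : G ≃* G) x
      = ((((u : G ≃* G)⁻¹ x)⁻¹ * (u : G ≃* G) ((u : G ≃* G)⁻¹ x)))⁻¹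
  rw [InvMemClass.coe_inv]
  have : (u : G ≃* G) ((u : G ≃* G)⁻¹ x) = x := by
    rw [MulAut.inv_def, MulEquiv.apply_symm_apply]
  rw [this]
  group

/-- The subgroup of `autSub (center G)` consisting of automorphisms whose associated
homomorphism takes values in an invariant subgroup `W'` of the center. -/
def autSubS (W' : Subgroup ↥(Subgroup.center G))
    (hW' : ∀ (u : ↥(autSub (Subgroup.center G))) (z : ↥(Subgroup.center G)),
      z ∈ W' → autSubF u ↑z ∈ W') :
    Subgroup ↥(autSub (Subgroup.center G)) where
  carrier := {u | ∀ x : G, autSubF u x ∈ W'}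
  one_mem' := by
    intro x
    have h1 : autSubF (1 : ↥(autSub (Subgroup.center G))) x = 1 := by
      ext; simp [autSubF_apply]
    rw [h1]
    exact W'.one_mem
  mul_mem' := by
    intro u v hu hv x
    rw [autSubF_mul]
    have h2 : autSubF u ((v : G ≃* G) x) = autSubF u x * autSubF u ↑(autSubF v x) := by
      rw [autSub_apply_eq v x, map_mul]
    exact W'.mul_mem (hv x) (h2 ▸ W'.mul_mem (hu x) (hW' u _ (hv x)))
  inv_mem' := by
    intro u hu x
    rw [autSubF_inv]
    exact W'.inv_mem (hu _)

lemma mem_autSubS {W' : Subgroup ↥(Subgroup.center G)} {hW'} 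
    {u : ↥(autSub (Subgroup.center G))} :
    u ∈ autSubS W' hW' ↔ ∀ x : G, autSubF u x ∈ W' := Iff.rfl

end AutSubF

/-- **Corollary 3.2.** If `G` is a finite `p`-group with `Z(G) ≤ Φ(G)`, then `Aut_{Z(G)}(G)` is
nilpotent of class at most `min r s`, where `exp(G/[G,G]) = p ^ r` and `exp(Z(G)) = p ^ s`. -/
theorem autSub_center_nilpotent (p r s : ℕ) (hp : p.Prime) (G : Type*) [Group G] [Finite G]
    (hG : IsPGroup p G)
    (hZ : Subgroup.center G ≤ frattini G)
    (hr : Monoid.exponent (G ⧸ commutator G) = p ^ r)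
    (hs : Monoid.exponent ↥(Subgroup.center G) = p ^ s) :
    (⊤ : Subgroup ↥(autSub (Subgroup.center G))).lowerCentralSeries (min r s) = ⊥ := by
  classical
  set C := Subgroup.center G with hC
  set A := autSub (Subgroup.center G) with hA
  letI : CommGroup ↥C := { (inferInstance : Group ↥C) with
    mul_comm := fun a b => Subtype.ext (Subgroup.mem_center_iff.mp b.2 a) }
  set Wp : Subgroup ↥C → Subgroup ↥C := fun X => X.map (powMonoidHom p) with hWp
  have Wp_le : ∀ X : Subgroup ↥C, Wp X ≤ X := by
    rintro X _ ⟨z, hz, rfl⟩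
    exact X.pow_mem hz p
  have Wp_mono : ∀ {X Y : Subgroup ↥C}, X ≤ Y → Wp X ≤ Wp Y := fun h => Subgroup.map_mono h
  set W : Subgroup ↥C := ⨆ u : ↥A, (autSubF u).range with hW
  have hrange : ∀ u : ↥A, (autSubF u).range ≤ W := fun u => le_iSup (fun u : ↥A => (autSubF u).range) u
  have hWmem : ∀ (u : ↥A) (x : G), autSubF u x ∈ W := fun u x => hrange u ⟨x, rfl⟩
  set Wk : ℕ → Subgroup ↥C := fun k => Wp^[k] W with hWk
  have Wk_succ : ∀ k, Wk (k + 1) = Wp (Wk k) := fun k => Function.iterate_succ_apply' Wp k W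
  have Wk_pow : ∀ (X : Subgroup ↥C) (k : ℕ) (z : ↥C), z ∈ X → z ^ (p ^ k) ∈ Wp^[k] X := by
    intro X k
    induction k generalizing X with
    | zero => intro z hz; simpa using hz
    | succ k ih =>
      intro z hz
      rw [Function.iterate_succ_apply]
      have h1 : z ^ p ∈ Wp X := ⟨z, hz, rfl⟩
      have h2 := ih (Wp X) (z ^ p) h1
      rwa [← pow_mul, ← pow_succ'] at h2
  have Wk_elem : ∀ (k : ℕ) (z : ↥C), z ∈ Wk k → ∃ w, w ∈ W ∧ w ^ (p ^ k) = z := by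
    intro k
    induction k with
    | zero => intro z hz; exact ⟨z, hz, by simp⟩
    | succ k ih =>
      intro z hz
      rw [Wk_succ] at hz
      obtain ⟨z', hz', rfl⟩ := hz
      obtain ⟨w, hw, rfl⟩ := ih z' hz'
      refine ⟨w, hw, ?_⟩
      show w ^ p ^ (k + 1) = (w ^ p ^ k) ^ p
      rw [← pow_mul, ← pow_succ]
  have hWk_inv : ∀ (k : ℕ) (u : ↥A) (z : ↥C), z ∈ Wk k → autSubF u ↑z ∈ Wk k := by
    intro k u z hz
    obtain ⟨w, hw, rfl⟩ := Wk_elem k z hz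
    have hcoe : ((w ^ p ^ k : ↥C) : G) = (↑w : G) ^ (p ^ k) := by
      exact SubgroupClass.coe_pow _ _
    rw [hcoe, map_pow]
    exact Wk_pow W k _ (hWmem u ↑w)
  have hB : ∀ (u : ↥A) (z : ↥C), autSubF u ↑z ∈ Wp ((autSubF u).range) := by
    intro u z
    exact frattini_map_mem_pow hp (autSubF u) (hZ z.2)
  -- main induction
  have main : ∀ k, (⊤ : Subgroup ↥A).lowerCentralSeries k ≤ autSubS (Wk k) (hWk_inv k) := by
    intro k
    induction k with
    | zero => exact fun u _ x => hWmem u x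
    | succ k ih =>
      rw [Subgroup.lowerCentralSeries_succ]
      refine Subgroup.commutator_le.mpr ?_
      intro a ha b _
      have haS : a ∈ autSubS (Wk k) (hWk_inv k) := ih ha
      have haS' : a⁻¹ ∈ autSubS (Wk k) (hWk_inv k) := (autSubS (Wk k) (hWk_inv k)).inv_mem haS
      have hfa : ∀ y : G, autSubF a y ∈ Wk k := haS
      have hfa' : ∀ y : G, autSubF a⁻¹ y ∈ Wk k := haS'
      have hrangea : (autSubF a).range ≤ Wk k := by
        rintro _ ⟨y, rfl⟩; exact hfa y
      intro x
      obtain ⟨y, hy⟩ : ∃ y, y = ((b : G ≃* G))⁻¹ x := ⟨_, rfl⟩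
      obtain ⟨t, ht0⟩ : ∃ t, t = autSubF a⁻¹ y := ⟨_, rfl⟩
      obtain ⟨e, he0⟩ : ∃ e, e = autSubF b y := ⟨_, rfl⟩
      have htW : t ∈ Wk k := ht0 ▸ hfa' y
      have h2 : ((a : G ≃* G))⁻¹ y = y * ↑t := by
        have h := autSub_apply_eq a⁻¹ y
        rwa [InvMemClass.coe_inv, ← ht0] at h
      have h6 : t = (autSubF a y * autSubF a ↑t)⁻¹ := by
        have h := autSubF_inv a y
        rwa [h2, map_mul, ← ht0] at h
      have h7 : t⁻¹ = autSubF a y * autSubF a ↑t := by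
        conv_lhs => rw [h6, inv_inv]
      have h6' : autSubF a y = t⁻¹ * (autSubF a ↑t)⁻¹ := eq_mul_inv_iff_mul_eq.mpr h7.symm
      open commutatorElement in
      have hc : (⁅a, b⁆ : ↥A) = a * (b * (a⁻¹ * b⁻¹)) := by
        rw [commutatorElement_def]; group
      have hbx : ((b⁻¹ : ↥A) : G ≃* G) x = y := by
        rw [InvMemClass.coe_inv, ← hy]
      have habx : ((a⁻¹ * b⁻¹ : ↥A) : G ≃* G) x = y * ↑t := by
        rw [MulMemClass.coe_mul, MulAut.mul_apply, hbx, InvMemClass.coe_inv, h2]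
      have hbabx : ((b * (a⁻¹ * b⁻¹) : ↥A) : G ≃* G) x = y * ↑e * (↑t * ↑(autSubF b ↑t)) := by
        rw [MulMemClass.coe_mul, MulAut.mul_apply, habx, map_mul, autSub_apply_eq b y, ← he0,
          autSub_apply_eq b ↑t]
      have hT1 : autSubF b⁻¹ x = e⁻¹ := by
        rw [autSubF_inv, ← hy, ← he0]
      open commutatorElement in
      have key : autSubF ⁅a, b⁆ x
          = autSubF b ↑t * (autSubF a ↑e * autSubF a ↑(autSubF b ↑t)) := by
        rw [hc, autSubF_mul, autSubF_mul, autSubF_mul, hbx, habx, hbabx, hT1, ← ht0]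
        simp only [map_mul]
        rw [← he0, h6']
        rw [← Equiv.apply_eq_iff_eq Additive.ofMul]
        simp only [ofMul_mul, ofMul_inv]
        abel
      rw [key]
      have memU : autSubF a ↑e ∈ Wk (k + 1) := by
        rw [Wk_succ]
        exact Wp_mono hrangea (hB a e)
      have memZ : autSubF a ↑(autSubF b ↑t) ∈ Wk (k + 1) := by
        rw [Wk_succ]
        exact Wp_mono hrangea (hB a (autSubF b ↑t))
      have memX : autSubF b ↑t ∈ Wk (k + 1) := by
        obtain ⟨w, hw, hwt⟩ := Wk_elem k t htW
        have hcoe : (↑t : G) = (↑w : G) ^ (p ^ k) := by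
          rw [← hwt]; exact (SubgroupClass.coe_pow _ _)
        rw [hcoe, map_pow]
        have hbw : autSubF b ↑w ∈ Wp W := Wp_mono (hrange b) (hB b w)
        have h := Wk_pow (Wp W) k _ hbw
        rwa [← Function.iterate_succ_apply] at h
      exact (Wk (k+1)).mul_mem memX ((Wk (k+1)).mul_mem memU memZ)
  -- the subgroup `Wk (min r s)` is trivial
  have hbot : Wk (min r s) = ⊥ := by
    rw [eq_bot_iff]
    intro z hz
    obtain ⟨w, hw, rfl⟩ := Wk_elem _ z hz
    rw [Subgroup.mem_bot]
    rcases le_total s r with h | h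
    · rw [min_eq_right h]
      rw [← hs]
      exact Monoid.pow_exponent_eq_one w
    · rw [min_eq_left h]
      -- every element of W has order dividing p ^ r
      have hWr : W ≤ (powMonoidHom (p ^ r) : ↥C →* ↥C).ker := by
        refine iSup_le ?_
        rintro u _ ⟨x, rfl⟩
        rw [MonoidHom.mem_ker]
        show (autSubF u x) ^ (p ^ r) = 1
        rw [← map_pow]
        have hxc : x ^ p ^ r ∈ commutator G := by
          have h1 : (QuotientGroup.mk x : G ⧸ commutator G) ^ (p ^ r) = 1 := by
            rw [← hr]; exact Monoid.pow_exponent_eq_one _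
          rwa [← QuotientGroup.mk_pow, QuotientGroup.eq_one_iff] at h1
        have hker : commutator G ≤ (autSubF u).ker := by
          rw [commutator]
          refine Subgroup.commutator_le.mpr ?_
          intro g _ h _
          rw [MonoidHom.mem_ker, map_commutatorElement]
          exact commutatorElement_eq_one_iff_commute.mpr (mul_comm _ _)
        exact hker hxc
      exact hWr hw
  -- conclude
  rw [eq_bot_iff]
  intro u hu
  have h := main (min r s) hu
  rw [Subgroup.mem_bot]
  have hu1 : ∀ x : G, (↑u : G ≃* G) x = x := by
    intro x
    have hx := h x
    rw [hbot, Subgroup.mem_bot] at hx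
    have hval : x⁻¹ * (↑u : G ≃* G) x = 1 := congrArg Subtype.val hx
    exact (inv_mul_eq_one.mp hval).symm
  apply Subtype.ext
  apply MulEquiv.ext
  intro x
  rw [hu1 x]
  rfl
end

section
/- Let p be a prime and G a finite p-group. Then the center of the group Aut_{P(G)}(G) has exponent at most p^{min{r,s}}, where exp(G/[G,G]) = p^r and exp(Z(G)) = p^s. -/
private lemma psi_iterate {A : Type*} [CommGroup A] (φ : A →* A) (k : ℕ) (a : A) :
    (fun c => c * φ c)^[k] a = ∏ i ∈ Finset.range (k + 1), (φ^[i] a) ^ (k.choose i) := by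
  induction k with
  | zero => simp
  | succ k ih =>
      have hφ : ∀ i : ℕ, φ ((φ^[i]) a) = φ^[i + 1] a := fun i => (Function.iterate_succ_apply' φ i a).symm
      rw [Function.iterate_succ_apply', ih]
      simp only [map_prod, map_pow, hφ]
      rw [Finset.prod_range_succ' (fun i => (φ^[i] a) ^ ((k+1).choose i)) (k+1)]
      rw [Finset.prod_range_succ' (fun i => (φ^[i] a) ^ (k.choose i)) k]
      simp only [Function.iterate_zero_apply, Nat.choose_zero_right, pow_one,
        Nat.choose_succ_succ, pow_add, Finset.prod_mul_distrib]
      rw [Finset.prod_range_succ (fun i => (φ^[i+1] a) ^ (k.choose (i+1))) k]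
      simp only [Nat.choose_succ_self, pow_zero, mul_one]
      simp [mul_comm, mul_left_comm, mul_assoc]

private lemma psi_prod {A : Type*} [CommGroup A] (φ : A →* A) (k : ℕ) (a : A) :
    ∏ j ∈ Finset.range k, (fun c => c * φ c)^[j] a
      = ∏ i ∈ Finset.range k, (φ^[i] a) ^ (k.choose (i + 1)) := by
  induction k with
  | zero => simp
  | succ k ih =>
      rw [Finset.prod_range_succ, ih, psi_iterate]
      rw [Finset.prod_range_succ (fun i => (φ^[i] a) ^ ((k+1).choose (i+1))) k]
      rw [Finset.prod_range_succ (fun i => (φ^[i] a) ^ (k.choose i)) k]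
      simp only [Nat.choose_succ_succ k, pow_add, Finset.prod_mul_distrib,
        Nat.choose_self, Nat.choose_succ_self, pow_zero, pow_one, mul_one,
        Nat.choose_succ_self_right]
      simp [mul_comm, mul_left_comm, mul_assoc]

private lemma dvd_aux {p : ℕ} (hp : p.Prime) (m i : ℕ) :
    p ^ m ∣ p ^ i * (p ^ m).choose (i + 1) := by
  rcases le_or_gt m i with h | h
  · exact Dvd.dvd.mul_right (pow_dvd_pow p h) _
  · have hpm : 0 < p ^ m := pow_pos hp.pos m
    have hi1 : i + 1 ≤ p ^ m := le_trans (by omega) (le_of_lt (Nat.lt_pow_self (n := m) hp.one_lt))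
    have hC : 0 < (p ^ m).choose (i + 1) := Nat.choose_pos hi1
    have hkey : p ^ m ∣ (p ^ m).choose (i + 1) * (i + 1) := by
      have h5 := Nat.add_one_mul_choose_eq (p ^ m - 1) i
      have h6 : p ^ m - 1 + 1 = p ^ m := by omega
      simp only [Nat.succ_eq_add_one, h6] at h5
      exact ⟨(p ^ m - 1).choose i, h5.symm⟩
    set t := (i + 1).factorization p with ht
    have htle : t ≤ i := by
      have h1 : p ^ t ∣ i + 1 := Nat.ordProj_dvd (i + 1) p
      have h2 : p ^ t ≤ i + 1 := Nat.le_of_dvd (by omega) h1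
      have h3 : i + 1 ≤ 2 ^ i := Nat.lt_two_pow_self
      have h4 : (2 : ℕ) ^ i ≤ p ^ i := Nat.pow_le_pow_left hp.two_le i
      exact Nat.pow_le_pow_iff_right hp.one_lt |>.mp (le_trans h2 (le_trans h3 h4))
    have hfac : m ≤ ((p ^ m).choose (i + 1) * (i + 1)).factorization p :=
      (hp.pow_dvd_iff_le_factorization (by positivity)).mp hkey
    rw [Nat.factorization_mul (by omega) (by omega)] at hfac
    simp only [Finsupp.add_apply] at hfac
    have hCdvd : p ^ (m - t) ∣ (p ^ m).choose (i + 1) :=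
      (hp.pow_dvd_iff_le_factorization (by omega)).mpr (by omega)
    obtain ⟨d, hd⟩ := hCdvd
    exact ⟨p ^ (i - t) * d, by rw [hd, ← mul_assoc, ← mul_assoc, ← pow_add, ← pow_add]
                               congr 2; omega⟩

open scoped IsMulCommutative

/-- **Lemma 3.3.** Let `G` be a finite `p`-group. Then the center of `Aut_{P(G)}(G)` has
exponent at most `p ^ min r s`, where `exp(G/[G,G]) = p ^ r` and `exp(Z(G)) = p ^ s`. -/
theorem center_autSub_exponent_le (p r s : ℕ) (hp : p.Prime) (G : Type*) [Group G] [Finite G]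
    (hG : IsPGroup p G)
    (hr : Monoid.exponent (G ⧸ commutator G) = p ^ r)
    (hs : Monoid.exponent ↥(Subgroup.center G) = p ^ s) :
    Monoid.exponent ↥(Subgroup.center ↥(autSub (groupP p G))) ≤ p ^ min r s := by
  classical
  set m := min r s with hm
  have hppos : 0 < p ^ m := pow_pos hp.pos _
  set H := autSub (groupP p G) with hH
  refine Nat.le_of_dvd hppos (Monoid.exponent_dvd_of_forall_pow_eq_one ?_)
  intro u
  set w : G ≃* G := ((u : ↥H) : G ≃* G) with hwdef
  -- w moves elements by elements of groupP
  have hw1 : ∀ x : G, x⁻¹ * w x ∈ groupP p G := (u : ↥H).2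
  -- w commutes with everything in H
  have hcommH : ∀ v : ↥H, (v : G ≃* G) * w = w * (v : G ≃* G) := by
    intro v
    have := (Subgroup.mem_center_iff.mp u.2) v
    have h2 := congrArg (Subtype.val) this
    simpa using h2
  -- values of x ↦ x⁻¹ * w x are central
  have hcent : ∀ g : G, g⁻¹ * w g ∈ Subgroup.center G := by
    intro g
    have hcg : MulAut.conj g ∈ H := by
      intro x
      open scoped commutatorElement in
      have hmem : ⁅x⁻¹, g⁆ ∈ commutator G := by
        rw [commutator_def]
        exact Subgroup.commutator_mem_commutator (Subgroup.mem_top _) (Subgroup.mem_top _)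
      have : x⁻¹ * (MulAut.conj g) x ∈ commutator G := by
        simpa [MulAut.conj_apply, commutatorElement_def, mul_assoc] using hmem
      exact (le_sup_left : commutator G ≤ groupP p G) this
    have hc := hcommH ⟨MulAut.conj g, hcg⟩
    rw [Subgroup.mem_center_iff]
    intro y
    obtain ⟨x, rfl⟩ : ∃ x, w x = y := ⟨w.symm y, w.apply_symm_apply y⟩
    have h3 : (MulAut.conj g * w) x = (w * MulAut.conj g) x := by rw [hc]
    simp only [MulAut.mul_apply, MulAut.conj_apply, map_mul, map_inv] at h3
    -- h3 : g * w x * g⁻¹ = w g * w x * (w g)⁻¹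
    have h4 : w x * (g⁻¹ * w g) = (g⁻¹ * w g) * w x := by
      have h5 := congrArg (fun z => g⁻¹ * z * w g) h3
      simpa [mul_assoc] using h5
    exact h4
  -- F : G →* center G
  have Fmul : ∀ x y : G, (x * y)⁻¹ * w (x * y) = (x⁻¹ * w x) * (y⁻¹ * w y) := by
    intro x y
    have hc := Subgroup.mem_center_iff.mp (hcent x) y⁻¹
    rw [map_mul, mul_inv_rev]
    calc y⁻¹ * x⁻¹ * (w x * w y) = (y⁻¹ * (x⁻¹ * w x)) * w y := by
          simp [mul_assoc]
      _ = ((x⁻¹ * w x) * y⁻¹) * w y := by rw [hc]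
      _ = (x⁻¹ * w x) * (y⁻¹ * w y) := by simp [mul_assoc]
  set F : G →* Subgroup.center G :=
    { toFun := fun x => ⟨x⁻¹ * w x, hcent x⟩
      map_one' := by ext; simp
      map_mul' := by intro x y; ext; exact Fmul x y } with hF
  have hFapp : ∀ x : G, ((F x : Subgroup.center G) : G) = x⁻¹ * w x := fun _ => rfl
  have hker : commutator G ≤ F.ker := Abelianization.commutator_subset_ker F
  have hFr : ∀ x : G, (F x) ^ (p ^ r) = 1 := by
    intro x
    have hxc : x ^ (p ^ r) ∈ commutator G := by
      have h6 := Monoid.pow_exponent_eq_one (QuotientGroup.mk x : G ⧸ commutator G)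
      rw [hr] at h6
      rwa [← QuotientGroup.mk_pow, QuotientGroup.eq_one_iff] at h6
    rw [← map_pow]
    exact hker hxc
  have hcen_s : ∀ a : Subgroup.center G, a ^ (p ^ s) = 1 := by
    intro a
    have h6 := Monoid.pow_exponent_eq_one a
    rwa [hs] at h6
  have hFm : ∀ x : G, (F x) ^ (p ^ m) = 1 := by
    intro x
    rcases min_cases r s with ⟨h1, _⟩ | ⟨h1, _⟩
    · rw [hm, h1]; exact hFr x
    · rw [hm, h1]; exact hcen_s (F x)
  set φ : Subgroup.center G →* Subgroup.center G := F.comp (Subgroup.center G).subtype with hphi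
  have hφapp : ∀ a : Subgroup.center G, φ a = F (a : G) := fun _ => rfl
  have h4a : ∀ g ∈ groupP p G, ∃ y : G, F g = (F y) ^ p := by
    have hK : groupP p G ≤ Subgroup.comap F ((F.range).map (powMonoidHom p)) := by
      rw [groupP]
      apply sup_le
      · intro g hg
        have h1 : F g = 1 := hker hg
        rw [Subgroup.mem_comap, h1]
        exact Subgroup.one_mem _
      · rw [Subgroup.closure_le]
        rintro x ⟨g, rfl⟩
        rw [SetLike.mem_coe, Subgroup.mem_comap, Subgroup.mem_map]
        refine ⟨(F g) ^ (if p = 2 then 2 else 1),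
          ⟨g ^ (if p = 2 then 2 else 1), map_pow F g _⟩, ?_⟩
        rw [powMonoidHom_apply, ← pow_mul, map_pow]
        congr 1
        rcases eq_or_ne p 2 with h2 | h2 <;> simp [h2]
    intro g hg
    have h1 := hK hg
    rw [Subgroup.mem_comap, Subgroup.mem_map] at h1
    obtain ⟨c, ⟨y, rfl⟩, hc⟩ := h1
    exact ⟨y, by rw [← hc, powMonoidHom_apply]⟩
  have h4 : ∀ (i : ℕ) (x : G), ∃ y : G, φ^[i] (F x) = (F y) ^ (p ^ i) := by
    intro i
    induction i with
    | zero => intro x; exact ⟨x, by simp⟩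
    | succ i ihi =>
        intro x
        obtain ⟨z, hz⟩ := h4a ((F x : Subgroup.center G) : G) (by rw [hFapp]; exact hw1 x)
        obtain ⟨y, hy⟩ := ihi z
        refine ⟨y, ?_⟩
        rw [Function.iterate_succ_apply, hφapp, hz, iterate_map_pow, hy, ← pow_mul, ← pow_succ]
  have hwc : ∀ c : Subgroup.center G, w (c : G) = (((fun c => c * φ c) c : Subgroup.center G) : G) := by
    intro c
    show w (c : G) = ((c * φ c : Subgroup.center G) : G)
    rw [Subgroup.coe_mul, hφapp, hFapp, mul_inv_cancel_left]
  have hwk : ∀ (k : ℕ) (c : Subgroup.center G),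
      (w ^ k) (c : G) = (((fun c => c * φ c)^[k] c : Subgroup.center G) : G) := by
    intro k
    induction k with
    | zero => intro c; simp
    | succ k ihk =>
        intro c
        rw [pow_succ]
        show (w ^ k) (w (c : G)) = _
        rw [hwc c, ihk, Function.iterate_succ_apply]
  have hiter : ∀ (k : ℕ) (x : G),
      (w ^ k) x = x * ((∏ j ∈ Finset.range k, (fun c => c * φ c)^[j] (F x) :
        Subgroup.center G) : G) := by
    intro k
    induction k with
    | zero => intro x; simp
    | succ k ihk =>
        intro x
        rw [pow_succ]
        show (w ^ k) (w x) = _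
        have hwx : w x = x * ((F x : Subgroup.center G) : G) := by
          rw [hFapp, mul_inv_cancel_left]
        rw [hwx, map_mul, ihk, hwk k (F x), Finset.prod_range_succ, Subgroup.coe_mul, mul_assoc]
  have hone : ∀ x : G, (w ^ (p ^ m)) x = x := by
    intro x
    rw [hiter]
    have hzero : (∏ j ∈ Finset.range (p ^ m), (fun c => c * φ c)^[j] (F x)) = 1 := by
      rw [psi_prod]
      apply Finset.prod_eq_one
      intro i _
      obtain ⟨y, hy⟩ := h4 i x
      obtain ⟨d, hd⟩ := dvd_aux hp m i
      rw [hy, ← pow_mul, hd, pow_mul, hFm y, one_pow]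
    rw [hzero]
    simp
  have hw2 : w ^ (p ^ m) = 1 := by
    ext x
    simpa using hone x
  apply Subtype.ext
  apply Subtype.ext
  push_cast
  rw [hwdef] at hw2
  simpa using hw2
end

section
/- Let p be a prime and G a finite p-group of nilpotency class c. Then the exponent of Aut_{P(G)}(G) does not exceed p^{t²c − t}, where t = min{r,s} with exp(G/[G,G]) = p^r and exp(Z(G)) = p^s. -/
universe u

section Helpers

/-- `p`-adic factor extraction from binomial coefficients of a prime power. -/
lemma choose_prime_pow_factor {p : ℕ} (hp : p.Prime) {t i : ℕ} (h1 : 1 ≤ i) (h2 : i ≤ p ^ t) :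
    ∃ a b, (p ^ t).choose i = p ^ a * b ∧ t < a + i := by
  obtain ⟨v, m, hm, hi⟩ := Nat.exists_eq_pow_mul_and_not_dvd
    (Nat.one_le_iff_ne_zero.mp h1) p hp.ne_one
  have hm0 : m ≠ 0 := by rintro rfl; exact hm (dvd_zero p)
  have hvi : v < i := by
    have h1' : v < p ^ v := Nat.lt_pow_self (n := v) hp.one_lt
    have h2' : p ^ v ≤ p ^ v * m := Nat.le_mul_of_pos_right _ (Nat.pos_of_ne_zero hm0)
    omega
  by_cases hvt : t ≤ v
  · exact ⟨0, (p ^ t).choose i, by rw [pow_zero, one_mul], by omega⟩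
  · have hpt : 0 < p ^ t := pow_pos hp.pos t
    have hsucc : p ^ t * Nat.choose (p ^ t - 1) (i - 1) = Nat.choose (p ^ t) i * i := by
      have h := Nat.add_one_mul_choose_eq (p ^ t - 1) (i - 1)
      rwa [Nat.sub_add_cancel hpt, Nat.sub_add_cancel h1] at h
    have hdvd : p ^ t ∣ Nat.choose (p ^ t) i * i := ⟨_, hsucc.symm⟩
    have hdvd2 : p ^ (t - v) * p ^ v ∣ (Nat.choose (p ^ t) i * m) * p ^ v := by
      rw [← pow_add]
      have htv : t - v + v = t := by omega
      rw [htv]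
      have heq : Nat.choose (p ^ t) i * m * p ^ v = Nat.choose (p ^ t) i * i := by
        rw [hi]; ring
      rw [heq]; exact hdvd
    have hdvd3 : p ^ (t - v) ∣ Nat.choose (p ^ t) i * m :=
      (mul_dvd_mul_iff_right (a := p ^ (t - v)) (pow_ne_zero v hp.pos.ne')).mp hdvd2
    have hcop : (p ^ (t - v)).Coprime m :=
      Nat.Coprime.pow_left _ ((Nat.Prime.coprime_iff_not_dvd hp).mpr hm)
    obtain ⟨b, hb⟩ := hcop.dvd_of_dvd_mul_right hdvd3
    exact ⟨t - v, b, hb, by omega⟩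

lemma subsingleton_of_commutator_eq_top {G : Type u} [Group G] [Group.IsNilpotent G]
    (h : commutator G = ⊤) : Subsingleton G := by
  have htop : ∀ n, Subgroup.lowerCentralSeries (⊤ : Subgroup G) n = ⊤ := by
    intro n
    induction n with
    | zero => exact Subgroup.lowerCentralSeries_zero _
    | succ n ih =>
      have h2 : Subgroup.lowerCentralSeries (⊤ : Subgroup G) (n + 1) = ⁅Subgroup.lowerCentralSeries (⊤ : Subgroup G) n, (⊤ : Subgroup G)⁆ := rfl
      rw [h2, ih, ← commutator_def, h]
  obtain ⟨n, hn⟩ := Subgroup.nilpotent_iff_lowerCentralSeries.mp ‹_›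
  rw [htop n] at hn
  constructor
  intro a b
  have ha : a ∈ (⊥ : Subgroup G) := hn ▸ Subgroup.mem_top a
  have hb : b ∈ (⊥ : Subgroup G) := hn ▸ Subgroup.mem_top b
  rw [Subgroup.mem_bot] at ha hb
  rw [ha, hb]

open commutatorElement in
lemma mk_mem_commutator_of_mem {G : Type u} [Group G] (N : Subgroup G) [N.Normal]
    {h : G} (hh : h ∈ commutator G) : ((h : G ⧸ N)) ∈ commutator (G ⧸ N) := by
  have hsuff : commutator G ≤ (commutator (G ⧸ N)).comap (QuotientGroup.mk' N) := by
    rw [commutator_def, Subgroup.commutator_le]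
    intro g₁ _ g₂ _
    rw [Subgroup.mem_comap]
    have hmap : (QuotientGroup.mk' N) ⁅g₁, g₂⁆ = ⁅(QuotientGroup.mk' N) g₁,
        (QuotientGroup.mk' N) g₂⁆ := map_commutatorElement _ _ _
    rw [hmap, commutator_def]
    exact Subgroup.commutator_mem_commutator (Subgroup.mem_top _) (Subgroup.mem_top _)
  exact hsuff hh

lemma mk_mem_groupP_of_mem {p : ℕ} {G : Type u} [Group G] (N : Subgroup G) [N.Normal]
    {h : G} (hh : h ∈ groupP p G) : ((h : G ⧸ N)) ∈ groupP p (G ⧸ N) := by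
  have hsuff : groupP p G ≤ (groupP p (G ⧸ N)).comap (QuotientGroup.mk' N) := by
    apply sup_le
    · intro g hg
      rw [Subgroup.mem_comap]
      exact Subgroup.mem_sup_left (mk_mem_commutator_of_mem N hg)
    · rw [Subgroup.closure_le]
      rintro x ⟨g, rfl⟩
      have hmem : ((g : G ⧸ N)) ^ (if p = 2 then 4 else p) ∈ groupP p (G ⧸ N) :=
        Subgroup.mem_sup_right (Subgroup.subset_closure ⟨(g : G ⧸ N), rfl⟩)
      rw [SetLike.mem_coe, Subgroup.mem_comap]
      show ((g ^ (if p = 2 then 4 else p) : G) : G ⧸ N) ∈ groupP p (G ⧸ N)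
      rw [QuotientGroup.mk_pow]
      exact hmem
  exact hsuff hh

lemma congr_pow_apply {G : Type u} [Group G] (N : Subgroup G) [N.Normal] (e : G ≃* G)
    (he : N.map e.toMonoidHom = N) (n : ℕ) (x : G) :
    ((QuotientGroup.congr N N e he) ^ n) ((x : G ⧸ N)) = (((e ^ n) x : G) : G ⧸ N) := by
  induction n with
  | zero => simp
  | succ n ih =>
    rw [pow_succ', pow_succ', MulAut.mul_apply, MulAut.mul_apply, ih]
    exact QuotientGroup.congr_mk N N e he _

lemma one_le_exponents {p r s : ℕ} (hp : p.Prime) {G : Type u} [Group G] [Finite G]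
    [Group.IsNilpotent G] [Nontrivial G] (hG : IsPGroup p G)
    (hr : Monoid.exponent (G ⧸ commutator G) = p ^ r)
    (hs : Monoid.exponent ↥(Subgroup.center G) = p ^ s) : 1 ≤ r ∧ 1 ≤ s := by
  haveI : Fact p.Prime := ⟨hp⟩
  constructor
  · by_contra h
    have hr0 : r = 0 := by omega
    rw [hr0, pow_zero] at hr
    have hsub : Subsingleton (G ⧸ commutator G) := Monoid.exp_eq_one_iff.mp hr
    have hct : commutator G = ⊤ := by
      rw [eq_top_iff]
      intro g _
      rw [← QuotientGroup.eq_one_iff]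
      exact Subsingleton.elim _ _
    exact not_subsingleton_iff_nontrivial.mpr ‹Nontrivial G›
      (subsingleton_of_commutator_eq_top hct)
  · by_contra h
    have hs0 : s = 0 := by omega
    rw [hs0, pow_zero] at hs
    exact not_subsingleton_iff_nontrivial.mpr hG.center_nontrivial
      (Monoid.exp_eq_one_iff.mp hs)

open IsMulCommutative in
/-- The key stability lemma: an automorphism in `Aut_{P(G)}(G)` which moves every element by a
central factor has order dividing `p ^ min r s`. -/
lemma central_aux {p r s : ℕ} (hp : p.Prime) {G : Type u} [Group G] (uu : G ≃* G)
    (huP : ∀ x : G, x⁻¹ * uu x ∈ groupP p G)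
    (huZ : ∀ x : G, x⁻¹ * uu x ∈ Subgroup.center G)
    (hr : ∀ y : G, y ^ p ^ r ∈ commutator G)
    (hs : ∀ z : ↥(Subgroup.center G), z ^ p ^ s = 1) :
    ∀ x : G, (uu ^ p ^ min r s) x = x := by
  classical
  let f : G → G := fun x => x⁻¹ * uu x
  have hux : ∀ x : G, uu x = x * f x := by
    intro x; show uu x = x * (x⁻¹ * uu x); rw [mul_inv_cancel_left]
  have hfmem : ∀ x : G, f x ∈ Subgroup.center G := huZ
  have hfmul : ∀ x y : G, f (x * y) = f x * f y := by
    intro x y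
    have hcx : ∀ g : G, g * f x = f x * g := fun g =>
      Subgroup.mem_center_iff.mp (hfmem x) g
    show (x * y)⁻¹ * uu (x * y) = (x⁻¹ * uu x) * (y⁻¹ * uu y)
    rw [map_mul, mul_inv_rev]
    calc y⁻¹ * x⁻¹ * (uu x * uu y) = y⁻¹ * (x⁻¹ * uu x) * uu y := by
          rw [mul_assoc, mul_assoc, mul_assoc]
      _ = (x⁻¹ * uu x) * y⁻¹ * uu y := by rw [hcx y⁻¹]
      _ = (x⁻¹ * uu x) * (y⁻¹ * uu y) := by rw [mul_assoc]
  let fC : G →* ↥(Subgroup.center G) :=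
    MonoidHom.mk' (fun x => ⟨f x, hfmem x⟩) (fun a b => Subtype.ext (hfmul a b))
  have hfC : ∀ x : G, ((fC x : G)) = f x := fun _ => rfl
  have hfpow : ∀ (x : G) (n : ℕ), f (x ^ n) = f x ^ n := by
    intro x n
    have h := congrArg Subtype.val (map_pow fC x n)
    rw [SubgroupClass.coe_pow] at h
    exact h
  have hfone : f 1 = 1 := by
    have h := congrArg Subtype.val (map_one fC)
    exact h
  have hfinv : ∀ x : G, f x⁻¹ = (f x)⁻¹ := by
    intro x
    have h := congrArg Subtype.val (map_inv fC x)
    rw [InvMemClass.coe_inv] at h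
    exact h
  -- f kills the commutator subgroup
  have hfker : ∀ h ∈ commutator G, f h = 1 := by
    intro h hh
    have hle : commutator G ≤ fC.ker := by
      rw [commutator_def, Subgroup.commutator_le]
      intro g₁ _ g₂ _
      rw [MonoidHom.mem_ker, map_commutatorElement]
      exact commutatorElement_eq_one_iff_mul_comm.mpr
        (Subtype.ext (Subgroup.mem_center_iff.mp (fC g₂).2 (fC g₁ : G)))
    have h1 := hle hh
    rw [MonoidHom.mem_ker] at h1
    exact congrArg Subtype.val h1
  -- f of an element of P(G) is a p-th power of a value of f
  have hP1 : ∀ h ∈ groupP p G, ∃ y : G, f h = f y ^ p := by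
    intro h hh
    have hgp : groupP p G = Subgroup.closure
        (commutatorSet G ∪ {x : G | ∃ g : G, g ^ (if p = 2 then 4 else p) = x}) := by
      rw [Subgroup.closure_union, ← commutator_eq_closure]
      rfl
    rw [hgp] at hh
    induction hh using Subgroup.closure_induction with
    | mem x hx =>
      rcases hx with hx | hx
      · refine ⟨1, ?_⟩
        rw [hfone, one_pow]
        exact hfker x (commutator_eq_closure G ▸ Subgroup.subset_closure hx)
      · obtain ⟨g, rfl⟩ := hx
        by_cases h2 : p = 2
        · subst h2
          refine ⟨g ^ 2, ?_⟩
          rw [if_pos rfl, hfpow, hfpow, ← pow_mul]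
        · refine ⟨g, ?_⟩
          rw [if_neg h2, hfpow]
    | one => exact ⟨1, by rw [hfone, one_pow]⟩
    | mul x y hx hy ihx ihy =>
      obtain ⟨y₁, h₁⟩ := ihx
      obtain ⟨y₂, h₂⟩ := ihy
      refine ⟨y₁ * y₂, ?_⟩
      have hcomm : Commute (f y₁) (f y₂) :=
        (Subgroup.mem_center_iff.mp (hfmem y₁) (f y₂)).symm
      rw [hfmul, h₁, h₂, hfmul, hcomm.mul_pow]
    | inv x hx ihx =>
      obtain ⟨y, hy⟩ := ihx
      exact ⟨y⁻¹, by rw [hfinv, hy, hfinv, inv_pow]⟩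
  -- iterates of f are p-power-th powers of values of f
  have hIter : ∀ (i : ℕ) (x : G), ∃ y : G, f^[i + 1] x = f y ^ p ^ i := by
    intro i
    induction i with
    | zero => intro x; exact ⟨x, by simp⟩
    | succ i ih =>
      intro x
      obtain ⟨y, hy⟩ := ih x
      obtain ⟨y', hy'⟩ := hP1 (f y) (huP y)
      refine ⟨y', ?_⟩
      rw [Function.iterate_succ_apply', hy, hfpow, hy', ← pow_mul, ← pow_succ']
  -- values of f raised to p ^ min r s vanish
  have hvan : ∀ y : G, f y ^ p ^ min r s = 1 := by
    intro y
    rcases le_total r s with hrs | hsr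
    · rw [min_eq_left hrs, ← hfpow]
      exact hfker _ (hr y)
    · rw [min_eq_right hsr]
      have h := congrArg Subtype.val (hs (fC y))
      rw [SubgroupClass.coe_pow] at h
      exact h
  -- the endomorphism of the center induced by uu
  let V : ↥(Subgroup.center G) →* ↥(Subgroup.center G) :=
    (MonoidHom.id _) * (fC.comp (Subgroup.center G).subtype)
  have huV : ∀ z : ↥(Subgroup.center G), uu (z : G) = ((V z : G)) := by
    intro z
    show uu (z : G) = ((z * fC (z : G) : ↥(Subgroup.center G)) : G)
    rw [Subgroup.coe_mul, hfC, ← hux]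
  have hVg : ∀ (i : ℕ) (x : G), V (fC (f^[i] x)) = fC (f^[i] x) * fC (f^[i + 1] x) := by
    intro i x
    show fC (f^[i] x) * fC ((fC (f^[i] x) : G)) = _
    rw [hfC, ← Function.iterate_succ_apply' f]
  -- the key formula for powers of uu
  have key : ∀ (n : ℕ) (x : G), (uu ^ n) x =
      x * ((∏ i ∈ Finset.range n, fC (f^[i] x) ^ n.choose (i + 1) :
        ↥(Subgroup.center G)) : G) := by
    intro n
    induction n with
    | zero => intro x; simp
    | succ n ihn =>
      intro x
      rw [pow_succ', MulAut.mul_apply, ihn x, map_mul, hux x,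
        huV (∏ i ∈ Finset.range n, fC (f^[i] x) ^ n.choose (i + 1)), mul_assoc]
      congr 1
      rw [show f x = ((fC x : G)) from rfl, ← Subgroup.coe_mul]
      congr 1
      rw [map_prod]
      have hform : ∀ i ∈ Finset.range n, V (fC (f^[i] x) ^ n.choose (i + 1)) =
          fC (f^[i] x) ^ n.choose (i + 1) * fC (f^[i + 1] x) ^ n.choose (i + 1) := by
        intro i _
        rw [map_pow, hVg i x, mul_pow]
      rw [Finset.prod_congr rfl hform, Finset.prod_mul_distrib]
      have hrhs : ∀ i ∈ Finset.range (n + 1),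
          fC (f^[i] x) ^ (n + 1).choose (i + 1) =
          fC (f^[i] x) ^ n.choose (i + 1) * fC (f^[i] x) ^ n.choose i := by
        intro i _
        rw [Nat.choose_succ_succ', pow_add, mul_comm]
      rw [Finset.prod_congr rfl hrhs, Finset.prod_mul_distrib]
      rw [Finset.prod_range_succ (fun i => fC (f^[i] x) ^ n.choose (i + 1)) n,
        Nat.choose_succ_self, pow_zero, mul_one]
      rw [Finset.prod_range_succ' (fun i => fC (f^[i] x) ^ n.choose i) n,
        Nat.choose_zero_right, pow_one]
      rw [mul_comm (fC x) _, ← mul_assoc]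
      rw [mul_comm (∏ i ∈ Finset.range n, fC (f^[i] x) ^ n.choose (i + 1))
        (∏ i ∈ Finset.range n, fC (f^[i + 1] x) ^ n.choose (i + 1))]
      rfl
  -- finish: every factor dies at n = p ^ min r s
  intro x
  rw [key (p ^ min r s) x]
  have hprod : (∏ i ∈ Finset.range (p ^ min r s),
      fC (f^[i] x) ^ (p ^ min r s).choose (i + 1) : ↥(Subgroup.center G)) = 1 := by
    apply Finset.prod_eq_one
    intro i hi
    rw [Finset.mem_range] at hi
    obtain ⟨y, hy⟩ := hIter i x
    obtain ⟨a, b, hab, htab⟩ := choose_prime_pow_factor hp (Nat.succ_le_succ (Nat.zero_le i))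
      (Nat.succ_le_of_lt hi)
    apply Subtype.ext
    rw [SubgroupClass.coe_pow, hfC]
    rw [show f (f^[i] x) = f^[i + 1] x from (Function.iterate_succ_apply' f i x).symm]
    show (f^[i + 1] x) ^ ((p ^ min r s).choose (i + 1)) = ((1 : ↥(Subgroup.center G)) : G)
    rw [hy, hab, ← pow_mul]
    have hexp : p ^ i * (p ^ a * b) = p ^ min r s * (p ^ (i + a - min r s) * b) := by
      rw [← mul_assoc, ← mul_assoc, ← pow_add, ← pow_add]
      congr 2
      omega
    rw [hexp, pow_mul, hvan y, one_pow]
    rfl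
  rw [hprod]
  simp

end Helpers

section MainInduction

lemma arith_step {tb t c : ℕ} (h1 : 1 ≤ tb) (h2 : tb ≤ t) (h3 : 1 ≤ c) :
    tb ^ 2 * c - tb + t ≤ t ^ 2 * (c + 1) - t := by
  obtain ⟨d, rfl⟩ : ∃ d, t = tb + d := ⟨t - tb, by omega⟩
  have e1 : tb ≤ tb ^ 2 * c := by nlinarith
  have f0 : 1 ≤ tb * (c + 1) := by
    calc 1 = 1 * 1 := by norm_num
    _ ≤ tb * (c + 1) := Nat.mul_le_mul h1 (by omega)
  have f1 : tb ≤ tb ^ 2 := by nlinarith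
  have f2 : 2 * d ≤ 2 * tb * d * (c + 1) := by nlinarith
  have e2 : tb ^ 2 * c + (tb + d) + (tb + d) ≤ (tb + d) ^ 2 * (c + 1) + tb := by nlinarith
  omega

lemma aux_main (p : ℕ) (hp : p.Prime) :
    ∀ (c : ℕ) (G : Type u) [Group G] [Finite G] [Group.IsNilpotent G],
      IsPGroup p G → Group.nilpotencyClass G = c →
      ∀ r s : ℕ, Monoid.exponent (G ⧸ commutator G) = p ^ r →
        Monoid.exponent ↥(Subgroup.center G) = p ^ s →
        ∀ w : ↥(autSub (groupP p G)), w ^ p ^ (min r s ^ 2 * c - min r s) = 1 := by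
  intro c
  induction c with
  | zero =>
    intro G _ _ _ hG hc r s hr hs w
    rw [nilpotencyClass_zero_iff_subsingleton] at hc
    haveI := hc
    haveI hsub : Subsingleton (G ≃* G) := ⟨fun a b => by ext x; exact Subsingleton.elim _ _⟩
    have hw1 : w = 1 := Subtype.ext (Subsingleton.elim _ _)
    rw [hw1, one_pow]
  | succ c ih =>
    intro G _ _ _ hG hc r s hr hs w
    haveI hnt : Nontrivial G := by
      by_contra h
      have hss : Subsingleton G := not_nontrivial_iff_subsingleton.mp h
      rw [nilpotencyClass_zero_iff_subsingleton.mpr hss] at hc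
      omega
    have HR : ∀ y : G, y ^ p ^ r ∈ commutator G := by
      intro y
      have h1 : ((y : G ⧸ commutator G)) ^ p ^ r = 1 := by
        rw [← hr]; exact Monoid.pow_exponent_eq_one _
      rwa [← QuotientGroup.mk_pow, QuotientGroup.eq_one_iff] at h1
    have HS : ∀ z : ↥(Subgroup.center G), z ^ p ^ s = 1 := by
      intro z; rw [← hs]; exact Monoid.pow_exponent_eq_one z
    obtain ⟨hr1, hs1⟩ := one_le_exponents hp hG hr hs
    have ht1 : 1 ≤ min r s := le_min hr1 hs1
    rcases Nat.eq_zero_or_pos c with rfl | hc1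
    · -- class exactly 1 : abelian case
      have hc' : Group.nilpotencyClass G = 1 := by omega
      have hcen : Subgroup.center G = ⊤ := by
        have h1 : Subgroup.upperCentralSeries G 1 = ⊤ := by
          rw [← hc']; exact Subgroup.upperCentralSeries_nilpotencyClass
        rwa [Subgroup.upperCentralSeries_one] at h1
      have hmemc : ∀ g : G, g ∈ Subgroup.center G := fun g =>
        hcen.symm ▸ Subgroup.mem_top g
      have hz : ∀ x : G, x⁻¹ * (w : G ≃* G) x ∈ Subgroup.center G := fun x => hmemc _
      have hcent := central_aux hp (w : G ≃* G) w.2 hz HR HS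
      have hpow : ((w : G ≃* G)) ^ p ^ min r s = 1 := by
        apply MulEquiv.ext
        intro x
        rw [hcent x]
        rfl
      have hcb : commutator G = ⊥ := by
        apply le_antisymm _ bot_le
        rw [commutator_def, Subgroup.commutator_le]
        intro g₁ _ g₂ _
        rw [Subgroup.mem_bot, commutatorElement_eq_one_iff_mul_comm]
        exact Subgroup.mem_center_iff.mp (hmemc g₂) g₁
      by_cases ht1' : min r s = 1
      · -- exponent of G is p, so P(G) = ⊥ and the automorphism group is trivial
        have hgp : ∀ g : G, g ^ p = 1 := by
          intro g
          rcases le_total r s with hrs | hsr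
          · have hr1' : r = 1 := by rw [min_eq_left hrs] at ht1'; exact ht1'
            have h := HR g
            rw [hr1', pow_one, hcb, Subgroup.mem_bot] at h
            exact h
          · have hs1' : s = 1 := by rw [min_eq_right hsr] at ht1'; exact ht1'
            have h := HS ⟨g, hmemc g⟩
            rw [hs1', pow_one] at h
            exact congrArg Subtype.val h
        have hk1 : ∀ g : G, g ^ (if p = 2 then 4 else p) = 1 := by
          intro g
          by_cases h2 : p = 2
          · subst h2
            rw [if_pos rfl, show (4 : ℕ) = 2 * 2 by norm_num, pow_mul, hgp g, one_pow]
          · rw [if_neg h2]; exact hgp g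
        have hPbot : groupP p G = ⊥ := by
          apply le_antisymm _ bot_le
          apply sup_le
          · rw [hcb]
          · rw [Subgroup.closure_le]
            rintro x ⟨g, rfl⟩
            rw [SetLike.mem_coe, Subgroup.mem_bot]
            exact hk1 g
        have hw1 : w = 1 := by
          apply Subtype.ext
          apply MulEquiv.ext
          intro x
          have hx : x⁻¹ * (w : G ≃* G) x = 1 := Subgroup.mem_bot.mp (by
            rw [← hPbot]; exact w.2 x)
          have hx2 : (w : G ≃* G) x = x := (inv_mul_eq_one.mp hx).symm
          rw [hx2]
          rfl
        have hzero : min r s ^ 2 * (0 + 1) - min r s = 0 := by rw [ht1']; norm_num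
        rw [hzero, pow_zero, pow_one, hw1]
      · -- min r s ≥ 2
        have h2t : 2 ≤ min r s := by omega
        have hsq : min r s + min r s ≤ min r s ^ 2 := by nlinarith
        have hle : min r s ≤ min r s ^ 2 * (0 + 1) - min r s := by
          have h01 : min r s ^ 2 * (0 + 1) = min r s ^ 2 := by ring
          omega
        obtain ⟨k, hk⟩ := pow_dvd_pow p hle
        have hfin : w ^ p ^ (min r s ^ 2 * (0 + 1) - min r s) = 1 := by
          apply Subtype.ext
          rw [SubgroupClass.coe_pow, hk, pow_mul]
          have : ((w : G ≃* G)) ^ p ^ min r s = 1 := hpow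
          rw [this, one_pow]
          rfl
        exact hfin
    · -- class at least 2 : induct through the centre
      haveI : Finite (G ⧸ Subgroup.center G) := Quotient.finite _
      have hGb : IsPGroup p (G ⧸ Subgroup.center G) := hG.to_quotient _
      have hcb : Group.nilpotencyClass (G ⧸ Subgroup.center G) = c := by
        rw [nilpotencyClass_quotient_center, hc]
        omega
      haveI hntb : Nontrivial (G ⧸ Subgroup.center G) := by
        by_contra h
        have hss := not_nontrivial_iff_subsingleton.mp h
        rw [nilpotencyClass_zero_iff_subsingleton.mpr hss] at hcb
        omega
      -- exponent of the abelianization of the quotient divides p ^ r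
      have hrb_dvd : Monoid.exponent ((G ⧸ Subgroup.center G) ⧸
          commutator (G ⧸ Subgroup.center G)) ∣ p ^ r := by
        apply Monoid.exponent_dvd_of_forall_pow_eq_one
        intro q
        obtain ⟨qb, rfl⟩ := QuotientGroup.mk_surjective q
        obtain ⟨x, rfl⟩ := QuotientGroup.mk_surjective qb
        rw [← QuotientGroup.mk_pow, ← QuotientGroup.mk_pow, QuotientGroup.eq_one_iff]
        exact mk_mem_commutator_of_mem _ (HR x)
      -- exponent of the center of the quotient divides p ^ s
      have hsb_dvd : Monoid.exponent ↥(Subgroup.center (G ⧸ Subgroup.center G)) ∣ p ^ s := by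
        apply Monoid.exponent_dvd_of_forall_pow_eq_one
        intro zb
        obtain ⟨z, hz⟩ := QuotientGroup.mk_surjective (zb : G ⧸ Subgroup.center G)
        apply Subtype.ext
        rw [SubgroupClass.coe_pow]
        show ((zb : G ⧸ Subgroup.center G)) ^ p ^ s = 1
        rw [← hz, ← QuotientGroup.mk_pow, QuotientGroup.eq_one_iff]
        -- z ^ p ^ s is central in G
        have hzc : ∀ g : G, z⁻¹ * g⁻¹ * z * g ∈ Subgroup.center G := by
          intro g
          have hcq := Subgroup.mem_center_iff.mp (hz ▸ zb.2) ((g : G ⧸ Subgroup.center G))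
          rw [← QuotientGroup.mk_mul, ← QuotientGroup.mk_mul] at hcq
          have h2 := QuotientGroup.eq.mp hcq
          simpa [mul_inv_rev, mul_assoc] using h2
        rw [Subgroup.mem_center_iff]
        intro g
        have hw := hzc g
        set W := z⁻¹ * g⁻¹ * z * g with hWdef
        have hgzg : g⁻¹ * z * g = z * W := by rw [hWdef]; group
        have key : ∀ n : ℕ, g⁻¹ * z ^ n * g = z ^ n * W ^ n := by
          intro n
          induction n with
          | zero => simp
          | succ n ihn =>
            have hcm : W ^ n * z = z * W ^ n :=
              (Subgroup.mem_center_iff.mp (pow_mem hw n) z).symm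
            calc g⁻¹ * z ^ (n + 1) * g = (g⁻¹ * z ^ n * g) * (g⁻¹ * z * g) := by
                  rw [pow_succ]; simp [mul_assoc]
              _ = (z ^ n * W ^ n) * (z * W) := by rw [ihn, hgzg]
              _ = z ^ (n + 1) * W ^ (n + 1) := by
                  rw [pow_succ z n, pow_succ W n, mul_assoc (z ^ n) (W ^ n) (z * W),
                    ← mul_assoc (W ^ n) z W, hcm, mul_assoc z (W ^ n) W,
                    mul_assoc (z ^ n) z (W ^ n * W)]
        have hvanw : W ^ p ^ s = 1 := by
          have h := congrArg Subtype.val (HS ⟨W, hw⟩)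
          rw [SubgroupClass.coe_pow] at h
          exact h
        have hfix : g⁻¹ * z ^ p ^ s * g = z ^ p ^ s := by
          rw [key (p ^ s), hvanw, mul_one]
        have := congrArg (fun y => g * y) hfix
        simpa [mul_assoc] using this.symm
      obtain ⟨rb, hrble, hrb⟩ := (Nat.dvd_prime_pow hp).mp hrb_dvd
      obtain ⟨sb, hsble, hsb⟩ := (Nat.dvd_prime_pow hp).mp hsb_dvd
      obtain ⟨hrb1, hsb1⟩ := one_le_exponents hp hGb hrb hsb
      have htble : min rb sb ≤ min r s := min_le_min hrble hsble
      have htb1 : 1 ≤ min rb sb := le_min hrb1 hsb1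
      -- the induced automorphism of the central quotient
      have hmap : (Subgroup.center G).map ((w : G ≃* G) : G →* G) = Subgroup.center G :=
        Subgroup.characteristic_iff_map_eq.mp inferInstance _
      have hEmem : QuotientGroup.congr (Subgroup.center G) (Subgroup.center G)
          (w : G ≃* G) hmap ∈ autSub (groupP p (G ⧸ Subgroup.center G)) := by
        intro q
        obtain ⟨x, rfl⟩ := QuotientGroup.mk_surjective q
        have heq : (↑x)⁻¹ * (QuotientGroup.congr (Subgroup.center G) (Subgroup.center G)
            (w : G ≃* G) hmap) ↑x = ((x⁻¹ * (w : G ≃* G) x : G) : G ⧸ Subgroup.center G) := by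
          rw [QuotientGroup.congr_mk, ← QuotientGroup.mk_inv, ← QuotientGroup.mk_mul]
        rw [heq]
        exact mk_mem_groupP_of_mem _ (w.2 x)
      have hstep := ih (G ⧸ Subgroup.center G) hGb hcb rb sb hrb hsb
        ⟨QuotientGroup.congr (Subgroup.center G) (Subgroup.center G) (w : G ≃* G) hmap, hEmem⟩
      have hE1 : (QuotientGroup.congr (Subgroup.center G) (Subgroup.center G)
          (w : G ≃* G) hmap) ^ p ^ (min rb sb ^ 2 * c - min rb sb) = 1 := by
        have h := congrArg Subtype.val hstep
        rw [SubgroupClass.coe_pow] at h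
        exact h
      have hcentral : ∀ x : G,
          x⁻¹ * (((w : G ≃* G) ^ p ^ (min rb sb ^ 2 * c - min rb sb)) x) ∈
            Subgroup.center G := by
        intro x
        have h1 := congr_pow_apply (Subgroup.center G) (w : G ≃* G) hmap
          (p ^ (min rb sb ^ 2 * c - min rb sb)) x
        rw [hE1] at h1
        have h2 : ((x : G ⧸ Subgroup.center G)) =
            ((((w : G ≃* G) ^ p ^ (min rb sb ^ 2 * c - min rb sb)) x : G) :
              G ⧸ Subgroup.center G) := by
          rw [← h1]
          rfl
        exact QuotientGroup.eq.mp h2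
      have huPn : ∀ x : G,
          x⁻¹ * (((w : G ≃* G) ^ p ^ (min rb sb ^ 2 * c - min rb sb)) x) ∈ groupP p G := by
        intro x
        have h2 := (w ^ p ^ (min rb sb ^ 2 * c - min rb sb)).2 x
        rwa [SubgroupClass.coe_pow] at h2
      have hcent := central_aux hp ((w : G ≃* G) ^ p ^ (min rb sb ^ 2 * c - min rb sb))
        huPn hcentral HR HS
      have hpow1 : w ^ (p ^ (min rb sb ^ 2 * c - min rb sb) * p ^ min r s) = 1 := by
        apply Subtype.ext
        rw [SubgroupClass.coe_pow]
        show ((w : G ≃* G)) ^ (p ^ (min rb sb ^ 2 * c - min rb sb) * p ^ min r s) = 1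
        rw [pow_mul]
        apply MulEquiv.ext
        intro x
        rw [hcent x]
        rfl
      have harith : min rb sb ^ 2 * c - min rb sb + min r s ≤
          min r s ^ 2 * (c + 1) - min r s := arith_step htb1 htble hc1
      have hdvd : p ^ (min rb sb ^ 2 * c - min rb sb) * p ^ min r s ∣
          p ^ (min r s ^ 2 * (c + 1) - min r s) := by
        rw [← pow_add]
        exact pow_dvd_pow p harith
      obtain ⟨k, hk⟩ := hdvd
      rw [hk, pow_mul, hpow1, one_pow]

end MainInduction

/-- **Theorem C (first part).** Let `G` be a finite `p`-group of class `c`. Then the exponent of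
`Aut_{P(G)}(G)` does not exceed `p ^ (t²c - t)`, where `t = min r s`, `exp(G/[G,G]) = p ^ r` and
`exp(Z(G)) = p ^ s`. -/
theorem autSub_groupP_exponent_le (p c r s : ℕ) (hp : p.Prime) (G : Type*) [Group G] [Finite G]
    (hG : IsPGroup p G) [Group.IsNilpotent G] (hc : Group.nilpotencyClass G = c)
    (hr : Monoid.exponent (G ⧸ commutator G) = p ^ r)
    (hs : Monoid.exponent ↥(Subgroup.center G) = p ^ s) :
    Monoid.exponent ↥(autSub (groupP p G)) ≤ p ^ (min r s ^ 2 * c - min r s) := by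
  have h := aux_main p hp c G hG hc r s hr hs
  have hdvd : Monoid.exponent ↥(autSub (groupP p G)) ∣ p ^ (min r s ^ 2 * c - min r s) :=
    Monoid.exponent_dvd_of_forall_pow_eq_one h
  exact Nat.le_of_dvd (pow_pos hp.pos _) hdvd
end
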